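/- arXiv:0904.0775 — 3 statements merged into one kernel-verified Lean document; each statement's English description precedes it below -/
import Mathlib

section
/- Let B = ∏_{i=1}^n b_{λ_i} be a finite Blaschke product with zeros λ_1,…,λ_n in the unit disc, where b_λ(z) = (λ−z)/(1−conj(λ)z), and let r = max_i |λ_i|. Then for every g in the model space K_B = H² ⊖ B·H², the derivative satisfies ‖g′‖_{H²} ≤ (5/2)·(n/(1−r))·‖g‖_{H²}. -/
open Complex Metric ComplexConjugate

noncomputable section

/-- Predicate: `f` is holomorphic on the unit disc. -/
def HolOn (f : ℂ → ℂ) : Prop := AnalyticOn ℂ f (Metric.ball 0 1)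

/-- `k`-th Taylor coefficient of `f` at the origin. -/
def coef (f : ℂ → ℂ) (k : ℕ) : ℂ := iteratedDeriv k f 0 / (Nat.factorial k)

/-- Hardy space `H²` norm via Taylor coefficients. -/
def H2norm (f : ℂ → ℂ) : ℝ := Real.sqrt (∑' k : ℕ, ‖coef f k‖ ^ 2)

def MemH2 (f : ℂ → ℂ) : Prop := HolOn f ∧ Summable (fun k : ℕ => ‖coef f k‖ ^ 2)

def Hinfnorm (f : ℂ → ℂ) : ℝ := sSup ((fun z => ‖f z‖) '' Metric.ball (0:ℂ) 1)

def MemHinf (f : ℂ → ℂ) : Prop := HolOn f ∧ BddAbove ((fun z => ‖f z‖) '' Metric.ball (0:ℂ) 1)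

/-- Elementary Blaschke factor. -/
def blaschke (l z : ℂ) : ℂ := (l - z) / (1 - conj l * z)

def BlaschkeProd {n : ℕ} (l : Fin n → ℂ) (z : ℂ) : ℂ := ∏ i, blaschke (l i) z

/-- `g` agrees with `f` on the finite sequence `l` (with multiplicities). -/
def AgreeOn {n : ℕ} (l : Fin n → ℂ) (f g : ℂ → ℂ) : Prop :=
  ∃ h : ℂ → ℂ, HolOn h ∧ ∀ z ∈ Metric.ball (0:ℂ) 1, f z - g z = BlaschkeProd l z * h z

/-- Interpolation constant `c(σ, H², H^∞)`. -/
def cH2Hinf {n : ℕ} (l : Fin n → ℂ) : ℝ :=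
  sSup { c | ∃ f, MemH2 f ∧ H2norm f ≤ 1 ∧
    c = sInf { m | ∃ g, MemHinf g ∧ Hinfnorm g = m ∧ AgreeOn l f g } }

/-- `C_{n,r}(H², H^∞)`. -/
def CnrH2Hinf (n : ℕ) (r : ℝ) : ℝ :=
  sSup { c | ∃ m, m ≤ n ∧ ∃ l : Fin m → ℂ, (∀ i, ‖l i‖ ≤ r) ∧ c = cH2Hinf l }

/-- Cauchy sesquilinear pairing. -/
def cauchyPairing (f g : ℂ → ℂ) : ℂ := ∑' k : ℕ, coef f k * conj (coef g k)

/-- Membership in the model space `K_B = H² ⊖ B H²`. -/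
def MemKB {n : ℕ} (l : Fin n → ℂ) (g : ℂ → ℂ) : Prop :=
  MemH2 g ∧ ∀ h, MemH2 h → cauchyPairing g (fun z => BlaschkeProd l z * h z) = 0


open Complex ComplexConjugate Filter

noncomputable section

namespace BMS

def gconv (μ : ℂ) (x : ℕ → ℂ) : ℕ → ℂ :=
  fun k => ∑ j ∈ Finset.range (k+1), μ^(k-j) * x j

def sh (x : ℕ → ℂ) : ℕ → ℂ := fun k => if k = 0 then 0 else x (k-1)

def bT (μ : ℂ) (x : ℕ → ℂ) : ℕ → ℂ :=
  fun k => conj μ * gconv μ x k - sh (gconv μ x) k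

def Dop (x : ℕ → ℂ) : ℕ → ℂ := fun k => ((k:ℂ)+1) * x (k+1)

def sqnorm (x : ℕ → ℂ) : ℝ := ∑' k, ‖x k‖^2

def Nn (x : ℕ → ℂ) : ℝ := Real.sqrt (sqnorm x)

def GB (x : ℕ → ℂ) : Prop :=
  ∃ C ρ : ℝ, 0 ≤ C ∧ 0 ≤ ρ ∧ ρ < 1 ∧ ∀ k, ‖x k‖ ≤ C * ρ^k

lemma gconv_zero (μ : ℂ) (x : ℕ → ℂ) : gconv μ x 0 = x 0 := by simp [gconv]

lemma gconv_succ (μ : ℂ) (x : ℕ → ℂ) (k : ℕ) :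
    gconv μ x (k+1) = μ * gconv μ x k + x (k+1) := by
  unfold gconv
  rw [Finset.sum_range_succ (n := k+1), Finset.mul_sum]
  congr 1
  · apply Finset.sum_congr rfl
    intro j hj
    rw [Finset.mem_range] at hj
    have h : k + 1 - j = (k - j) + 1 := by omega
    rw [h, pow_succ]; ring
  · simp

lemma gconv_unique (μ : ℂ) (x w : ℕ → ℂ) (h0 : w 0 = x 0)
    (hs : ∀ k, w (k+1) = μ * w k + x (k+1)) : w = gconv μ x := by
  funext k
  induction k with
  | zero => simpa [gconv_zero] using h0
  | succ k ih => rw [hs k, ih, gconv_succ]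

lemma sh_zero (x : ℕ → ℂ) : sh x 0 = 0 := rfl

lemma sh_succ (x : ℕ → ℂ) (k : ℕ) : sh x (k+1) = x k := rfl

lemma x_eq_w_sub (μ : ℂ) (x : ℕ → ℂ) (k : ℕ) :
    x k = gconv μ x k - μ * sh (gconv μ x) k := by
  cases k with
  | zero => simp [gconv_zero, sh_zero]
  | succ k => rw [sh_succ, gconv_succ]; ring

/-- helper: polynomial-times-geometric dominated by bigger geometric -/
lemma poly_geom {τ ρ' : ℝ} (hτ : 0 ≤ τ) (h : τ < ρ') :
    ∃ D : ℝ, 0 ≤ D ∧ ∀ k : ℕ, ((k:ℝ)+1) * τ^k ≤ D * ρ'^k := by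
  have hρ' : 0 < ρ' := lt_of_le_of_lt hτ h
  set q := τ / ρ' with hq
  have hq0 : 0 ≤ q := div_nonneg hτ hρ'.le
  have hq1 : q < 1 := (div_lt_one hρ').mpr h
  have hqn : ‖q‖ < 1 := by rwa [Real.norm_eq_abs, _root_.abs_of_nonneg hq0]
  have hsum : Summable (fun k : ℕ => ((k:ℝ)+1) * q^k) := by
    have h1 : Summable (fun k : ℕ => (k:ℝ) * q^k) := by
      simpa using summable_pow_mul_geometric_of_norm_lt_one 1 hqn
    have h2 : Summable (fun k : ℕ => q^k) := summable_geometric_of_norm_lt_one hqn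
    simpa [add_mul] using h1.add h2
  refine ⟨∑' k : ℕ, ((k:ℝ)+1) * q^k, tsum_nonneg (fun k : ℕ => by positivity), fun k => ?_⟩
  have hle : ((k:ℝ)+1) * q^k ≤ ∑' k : ℕ, ((k:ℝ)+1) * q^k :=
    hsum.le_tsum k (fun j _ => by positivity)
  have hqk : q^k = τ^k / ρ'^k := div_pow τ ρ' k
  have hρk : (0:ℝ) < ρ'^k := pow_pos hρ' k
  calc ((k:ℝ)+1) * τ^k = (((k:ℝ)+1) * q^k) * ρ'^k := by
        rw [hqk]; field_simp
    _ ≤ (∑' k : ℕ, ((k:ℝ)+1) * q^k) * ρ'^k := by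
        apply mul_le_mul_of_nonneg_right hle hρk.le

lemma GB_zero : GB (fun _ => 0) := ⟨0, 0, le_refl _, le_refl _, by norm_num, by simp⟩

lemma GB_geom {μ : ℂ} (h : ‖μ‖ < 1) : GB (fun k => μ^k) :=
  ⟨1, ‖μ‖, zero_le_one, norm_nonneg _, h, fun k => by simp [norm_pow]⟩

lemma GB_congr {x y : ℕ → ℂ} (h : ∀ k, x k = y k) (hx : GB x) : GB y := by
  obtain ⟨C, ρ, hC, hρ0, hρ1, hb⟩ := hx
  exact ⟨C, ρ, hC, hρ0, hρ1, fun k => (h k) ▸ hb k⟩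

lemma GB_smul (c : ℂ) {x : ℕ → ℂ} (hx : GB x) : GB (fun k => c * x k) := by
  obtain ⟨C, ρ, hC, hρ0, hρ1, hb⟩ := hx
  refine ⟨‖c‖ * C, ρ, by positivity, hρ0, hρ1, fun k => ?_⟩
  rw [norm_mul, mul_assoc]
  exact mul_le_mul_of_nonneg_left (hb k) (norm_nonneg c)

lemma GB_add {x y : ℕ → ℂ} (hx : GB x) (hy : GB y) : GB (fun k => x k + y k) := by
  obtain ⟨C, ρ, hC, hρ0, hρ1, hb⟩ := hx
  obtain ⟨C', ρ', hC', hρ0', hρ1', hb'⟩ := hy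
  refine ⟨C + C', max ρ ρ', by positivity, le_max_of_le_left hρ0, max_lt hρ1 hρ1', fun k => ?_⟩
  have h1 : ‖x k + y k‖ ≤ C * ρ^k + C' * ρ'^k :=
    le_trans (norm_add_le _ _) (add_le_add (hb k) (hb' k))
  have h2 : ρ^k ≤ (max ρ ρ')^k := pow_le_pow_left₀ hρ0 (le_max_left _ _) k
  have h3 : ρ'^k ≤ (max ρ ρ')^k := pow_le_pow_left₀ hρ0' (le_max_right _ _) k
  have h4 : (0:ℝ) ≤ (max ρ ρ')^k := pow_nonneg (le_max_of_le_left hρ0) k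
  nlinarith

lemma GB_sub {x y : ℕ → ℂ} (hx : GB x) (hy : GB y) : GB (fun k => x k - y k) := by
  have := GB_add hx (GB_smul (-1) hy)
  apply GB_congr (fun k => ?_) this
  simp; ring

lemma GB_sh {x : ℕ → ℂ} (hx : GB x) : GB (sh x) := by
  obtain ⟨C, ρ, hC, hρ0, hρ1, hb⟩ := hx
  by_cases hρz : ρ = 0
  · refine ⟨C + ‖x 0‖, 1/2, by positivity, by norm_num, by norm_num, fun k => ?_⟩
    match k with
    | 0 => simp [sh_zero]; positivity
    | 1 =>
      have := hb 0
      simp [sh_succ, hρz] at this ⊢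
      nlinarith [norm_nonneg (x 0)]
    | (k+2) =>
      have := hb (k+1)
      rw [hρz] at this
      simp [sh_succ] at this ⊢
      have hx0 : ‖x (k+1)‖ ≤ 0 := by simpa using this
      exact le_trans hx0 (by positivity)
  · have hρpos : 0 < ρ := lt_of_le_of_ne hρ0 (Ne.symm hρz)
    refine ⟨C / ρ, ρ, by positivity, hρ0, hρ1, fun k => ?_⟩
    match k with
    | 0 => simp [sh_zero]; positivity
    | (k+1) =>
      rw [sh_succ]
      calc ‖x k‖ ≤ C * ρ^k := hb k
        _ = C / ρ * ρ^(k+1) := by field_simp; ring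

lemma GB_gconv {μ : ℂ} {x : ℕ → ℂ} (hμ : ‖μ‖ < 1) (hx : GB x) : GB (gconv μ x) := by
  obtain ⟨C, ρ, hC, hρ0, hρ1, hb⟩ := hx
  set τ := max ρ ‖μ‖ with hτdef
  have hτ0 : 0 ≤ τ := le_max_of_le_left hρ0
  have hτ1 : τ < 1 := max_lt hρ1 hμ
  set ρ' := (1+τ)/2 with hρ'def
  have hττ : τ < ρ' := by rw [hρ'def]; linarith
  have hρ'1 : ρ' < 1 := by rw [hρ'def]; linarith
  have hρ'0 : 0 ≤ ρ' := le_trans hτ0 hττ.le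
  obtain ⟨D, hD0, hD⟩ := poly_geom hτ0 hττ
  refine ⟨C * D, ρ', by positivity, hρ'0, hρ'1, fun k => ?_⟩
  have h1 : ‖gconv μ x k‖ ≤ ∑ j ∈ Finset.range (k+1), τ^(k-j) * (C * τ^j) := by
    refine le_trans (norm_sum_le _ _) (Finset.sum_le_sum fun j hj => ?_)
    rw [norm_mul, norm_pow]
    have e1 : ‖μ‖^(k-j) ≤ τ^(k-j) := pow_le_pow_left₀ (norm_nonneg _) (le_max_right _ _) _
    have e2 : ‖x j‖ ≤ C * τ^j := le_trans (hb j) (by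
      have : ρ^j ≤ τ^j := pow_le_pow_left₀ hρ0 (le_max_left _ _) _
      nlinarith)
    have := mul_le_mul e1 e2 (norm_nonneg _) (pow_nonneg hτ0 _)
    linarith
  have h2 : ∀ j ∈ Finset.range (k+1), τ^(k-j) * (C * τ^j) = C * τ^k := by
    intro j hj
    rw [Finset.mem_range] at hj
    rw [← mul_assoc, mul_comm (τ^(k-j)) C, mul_assoc, ← pow_add]
    congr 2
    omega
  rw [Finset.sum_congr rfl h2, Finset.sum_const, Finset.card_range] at h1
  calc ‖gconv μ x k‖ ≤ (k+1) * (C * τ^k) := by simpa using h1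
    _ = C * (((k:ℝ)+1) * τ^k) := by push_cast; ring
    _ ≤ C * (D * ρ'^k) := mul_le_mul_of_nonneg_left (hD k) hC
    _ = C * D * ρ'^k := by ring

lemma GB_Dop {x : ℕ → ℂ} (hx : GB x) : GB (Dop x) := by
  obtain ⟨C, ρ, hC, hρ0, hρ1, hb⟩ := hx
  set ρ' := (1+ρ)/2 with hρ'def
  have hρρ : ρ < ρ' := by rw [hρ'def]; linarith
  have hρ'1 : ρ' < 1 := by rw [hρ'def]; linarith
  have hρ'0 : 0 ≤ ρ' := le_trans hρ0 hρρ.le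
  obtain ⟨D, hD0, hD⟩ := poly_geom hρ0 hρρ
  refine ⟨C * D, ρ', by positivity, hρ'0, hρ'1, fun k => ?_⟩
  have h1 : ‖Dop x k‖ = ((k:ℝ)+1) * ‖x (k+1)‖ := by
    have hn : ‖((k:ℂ)+1)‖ = (k:ℝ)+1 := by
      rw [show ((k:ℂ)+1) = ((k+1 : ℕ) : ℂ) from by push_cast; ring, Complex.norm_natCast]
      push_cast; ring
    simp only [Dop, norm_mul, hn]
  calc ‖Dop x k‖ = ((k:ℝ)+1) * ‖x (k+1)‖ := h1
    _ ≤ ((k:ℝ)+1) * (C * ρ^(k+1)) := by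
        apply mul_le_mul_of_nonneg_left (hb (k+1)) (by positivity)
    _ ≤ C * (((k:ℝ)+1) * ρ^k) := by
        rw [pow_succ]
        have h5 : (0:ℝ) ≤ ρ^k := pow_nonneg hρ0 k
        have h6 : (0:ℝ) ≤ ((k:ℝ)+1) * C * ρ^k * (1 - ρ) := by
          apply mul_nonneg (mul_nonneg (mul_nonneg (by positivity) hC) h5)
          linarith
        nlinarith
    _ ≤ C * (D * ρ'^k) := mul_le_mul_of_nonneg_left (hD k) hC
    _ = C * D * ρ'^k := by ring

lemma GB_summable_sq {x : ℕ → ℂ} (hx : GB x) : Summable (fun k => ‖x k‖^2) := by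
  obtain ⟨C, ρ, hC, hρ0, hρ1, hb⟩ := hx
  have hs : Summable (fun k : ℕ => C^2 * (ρ^2)^k) := by
    apply Summable.mul_left
    exact summable_geometric_of_lt_one (by positivity) (by nlinarith)
  apply Summable.of_nonneg_of_le (fun k => by positivity) (fun k => ?_) hs
  calc ‖x k‖^2 ≤ (C * ρ^k)^2 := pow_le_pow_left₀ (norm_nonneg _) (hb k) 2
      _ = C^2 * (ρ^2)^k := by rw [mul_pow, ← pow_mul, ← pow_mul, mul_comm 2 k]

lemma GB_summable_geom {x : ℕ → ℂ} (hx : GB x) {z : ℂ} (hz : ‖z‖ < 1) :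
    Summable (fun k => x k * z^k) := by
  obtain ⟨C, ρ, hC, hρ0, hρ1, hb⟩ := hx
  apply Summable.of_norm
  have hs : Summable (fun k : ℕ => C * ‖z‖^k) :=
    Summable.mul_left _ (summable_geometric_of_lt_one (norm_nonneg z) hz)
  apply Summable.of_nonneg_of_le (fun k => norm_nonneg _) (fun k => ?_) hs
  rw [norm_mul, norm_pow]
  have h1 : ρ^k ≤ 1 := pow_le_one₀ hρ0 hρ1.le
  have h2 : ‖x k‖ ≤ C := le_trans (hb k) (by nlinarith)
  exact mul_le_mul_of_nonneg_right h2 (by positivity)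

lemma GB_tendsto_zero {x : ℕ → ℂ} (hx : GB x) : Tendsto x atTop (nhds 0) := by
  obtain ⟨C, ρ, hC, hρ0, hρ1, hb⟩ := hx
  apply squeeze_zero_norm hb
  rw [show (0:ℝ) = C * 0 by ring]
  exact (tendsto_pow_atTop_nhds_zero_of_lt_one hρ0 hρ1).const_mul C

end BMS

namespace BMS
open Complex ComplexConjugate Filter

lemma sqnorm_nonneg (x : ℕ → ℂ) : 0 ≤ sqnorm x := tsum_nonneg (fun k => by positivity)

lemma Nn_nonneg (x : ℕ → ℂ) : 0 ≤ Nn x := Real.sqrt_nonneg _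

lemma Nn_congr {x y : ℕ → ℂ} (h : ∀ k, x k = y k) : Nn x = Nn y := by
  unfold Nn sqnorm
  congr 1
  exact tsum_congr (fun k => by rw [h k])

lemma sq_Nn (x : ℕ → ℂ) : Nn x ^ 2 = sqnorm x :=
  Real.sq_sqrt (sqnorm_nonneg x)

lemma Nn_smul (c : ℂ) (x : ℕ → ℂ) : Nn (fun k => c * x k) = ‖c‖ * Nn x := by
  unfold Nn sqnorm
  have h : ∀ k : ℕ, ‖c * x k‖^2 = ‖c‖^2 * ‖x k‖^2 := fun k => by
    rw [norm_mul, mul_pow]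
  rw [tsum_congr h, tsum_mul_left, Real.sqrt_mul (by positivity),
    Real.sqrt_sq (norm_nonneg c)]

lemma Nn_zero : Nn (fun _ => 0) = 0 := by
  unfold Nn sqnorm; simp

lemma finCS (s : Finset ℕ) (f g : ℕ → ℝ) :
    ∑ k ∈ s, f k * g k ≤ Real.sqrt (∑ k ∈ s, f k ^ 2) * Real.sqrt (∑ k ∈ s, g k ^ 2) := by
  have h := Finset.sum_mul_sq_le_sq_mul_sq s f g
  have h2 : 0 ≤ ∑ k ∈ s, f k ^ 2 := Finset.sum_nonneg (fun k _ => sq_nonneg _)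
  have h3 : 0 ≤ ∑ k ∈ s, g k ^ 2 := Finset.sum_nonneg (fun k _ => sq_nonneg _)
  rw [← Real.sqrt_mul h2]
  have habs : ∑ k ∈ s, f k * g k ≤ |∑ k ∈ s, f k * g k| := le_abs_self _
  refine le_trans habs ?_
  rw [← Real.sqrt_sq_eq_abs]
  exact Real.sqrt_le_sqrt h

/-- Minkowski inequality for our ℓ² norms -/
lemma Nn_add_le {x y : ℕ → ℂ} (hx : GB x) (hy : GB y) :
    Nn (fun k => x k + y k) ≤ Nn x + Nn y := by
  have hsx := GB_summable_sq hx
  have hsy := GB_summable_sq hy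
  have hsxy := GB_summable_sq (GB_add hx hy)
  have key : sqnorm (fun k => x k + y k) ≤ (Nn x + Nn y)^2 := by
    apply hsxy.tsum_le_of_sum_le
    intro s
    have step1 : ∑ k ∈ s, ‖x k + y k‖^2 ≤
        ∑ k ∈ s, ‖x k‖^2 + 2 * ∑ k ∈ s, ‖x k‖ * ‖y k‖ + ∑ k ∈ s, ‖y k‖^2 := by
      have h : ∀ k ∈ s, ‖x k + y k‖^2 ≤ ‖x k‖^2 + 2 * (‖x k‖ * ‖y k‖) + ‖y k‖^2 := by
        intro k _
        have := norm_add_le (x k) (y k)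
        nlinarith [norm_nonneg (x k), norm_nonneg (y k), norm_nonneg (x k + y k)]
      calc ∑ k ∈ s, ‖x k + y k‖^2 ≤ ∑ k ∈ s, (‖x k‖^2 + 2 * (‖x k‖ * ‖y k‖) + ‖y k‖^2) :=
            Finset.sum_le_sum h
        _ = ∑ k ∈ s, ‖x k‖^2 + 2 * ∑ k ∈ s, ‖x k‖ * ‖y k‖ + ∑ k ∈ s, ‖y k‖^2 := by
            rw [Finset.sum_add_distrib, Finset.sum_add_distrib, Finset.mul_sum]
    have step2 : ∑ k ∈ s, ‖x k‖ * ‖y k‖ ≤ Nn x * Nn y := by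
      refine le_trans (finCS s _ _) ?_
      apply mul_le_mul
      · exact Real.sqrt_le_sqrt (hsx.sum_le_tsum s (fun k _ => by positivity))
      · exact Real.sqrt_le_sqrt (hsy.sum_le_tsum s (fun k _ => by positivity))
      · positivity
      · exact Nn_nonneg x
    have step3 : ∑ k ∈ s, ‖x k‖^2 ≤ Nn x ^ 2 := by
      rw [sq_Nn x]; exact hsx.sum_le_tsum s (fun k _ => by positivity)
    have step4 : ∑ k ∈ s, ‖y k‖^2 ≤ Nn y ^ 2 := by
      rw [sq_Nn y]; exact hsy.sum_le_tsum s (fun k _ => by positivity)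
    nlinarith
  calc Nn (fun k => x k + y k) = Real.sqrt (sqnorm fun k => x k + y k) := rfl
    _ ≤ Real.sqrt ((Nn x + Nn y)^2) := Real.sqrt_le_sqrt key
    _ = Nn x + Nn y := Real.sqrt_sq (add_nonneg (Nn_nonneg x) (Nn_nonneg y))

lemma Nn_sub_le' {x y : ℕ → ℂ} (hx : GB x) (hy : GB y) :
    Nn (fun k => x k - y k) ≤ Nn x + Nn y := by
  have h := Nn_add_le hx (GB_smul (-1) hy)
  have he1 : Nn (fun k => x k + (-1) * y k) = Nn (fun k => x k - y k) :=
    Nn_congr (fun k => by ring)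
  have he2 : Nn (fun k => (-1 : ℂ) * y k) = Nn y := by
    rw [Nn_smul]; simp
  rw [he1, he2] at h; exact h

/-- Young's inequality: convolution with a geometric sequence -/
lemma Nn_gconv_le {μ : ℂ} {x : ℕ → ℂ} {t : ℝ} (hμ : ‖μ‖ ≤ t) (ht1 : t < 1) (hx : GB x) :
    Nn (gconv μ x) ≤ (1-t)⁻¹ * Nn x := by
  have ht0 : 0 ≤ t := le_trans (norm_nonneg μ) hμ
  have hμ1 : ‖μ‖ < 1 := lt_of_le_of_lt hμ ht1
  have hinv : (0:ℝ) < (1-t)⁻¹ := by apply inv_pos.mpr; linarith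
  have hgeo : ∀ m : ℕ, ∑ i ∈ Finset.range m, t^i ≤ (1-t)⁻¹ := by
    intro m
    have hval : ∑' i : ℕ, t^i = (1-t)⁻¹ := tsum_geometric_of_lt_one ht0 ht1
    rw [← hval]
    exact (summable_geometric_of_lt_one ht0 ht1).sum_le_tsum _ (fun i _ => by positivity)
  set c : ℕ → ℝ := fun j => ‖x j‖^2 with hc
  have hcn : ∀ j, 0 ≤ c j := fun j => by positivity
  have hcsum : Summable c := GB_summable_sq hx
  have hcts : ∀ (s : Finset ℕ), ∑ j ∈ s, c j ≤ sqnorm x :=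
    fun s => hcsum.sum_le_tsum s (fun j _ => hcn j)
  -- pointwise bound
  have pw : ∀ k, ‖gconv μ x k‖^2 ≤ (1-t)⁻¹ * ∑ j ∈ Finset.range (k+1), t^(k-j) * c j := by
    intro k
    have h1 : ‖gconv μ x k‖ ≤ ∑ j ∈ Finset.range (k+1), t^(k-j) * ‖x j‖ := by
      refine le_trans (norm_sum_le _ _) (Finset.sum_le_sum fun j _ => ?_)
      rw [norm_mul, norm_pow]
      exact mul_le_mul_of_nonneg_right (pow_le_pow_left₀ (norm_nonneg μ) hμ _) (norm_nonneg _)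
    have h2 : (∑ j ∈ Finset.range (k+1), t^(k-j) * ‖x j‖)^2 ≤
        (∑ j ∈ Finset.range (k+1), t^(k-j)) * (∑ j ∈ Finset.range (k+1), t^(k-j) * c j) := by
      have hCS := Finset.sum_mul_sq_le_sq_mul_sq (Finset.range (k+1))
        (fun j => Real.sqrt (t^(k-j))) (fun j => Real.sqrt (t^(k-j)) * ‖x j‖)
      have e1 : ∀ j, Real.sqrt (t^(k-j)) * (Real.sqrt (t^(k-j)) * ‖x j‖) = t^(k-j) * ‖x j‖ := by
        intro j; rw [← mul_assoc, Real.mul_self_sqrt (by positivity)]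
      have e2 : ∀ j, (Real.sqrt (t^(k-j)))^2 = t^(k-j) := fun j => Real.sq_sqrt (by positivity)
      have e3 : ∀ j, (Real.sqrt (t^(k-j)) * ‖x j‖)^2 = t^(k-j) * c j := by
        intro j; rw [mul_pow, e2]
      calc (∑ j ∈ Finset.range (k+1), t^(k-j) * ‖x j‖)^2
          = (∑ j ∈ Finset.range (k+1), Real.sqrt (t^(k-j)) * (Real.sqrt (t^(k-j)) * ‖x j‖))^2 := by
            congr 1; exact (Finset.sum_congr rfl (fun j _ => (e1 j).symm))
        _ ≤ (∑ j ∈ Finset.range (k+1), (Real.sqrt (t^(k-j)))^2) *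
            (∑ j ∈ Finset.range (k+1), (Real.sqrt (t^(k-j)) * ‖x j‖)^2) := hCS
        _ = (∑ j ∈ Finset.range (k+1), t^(k-j)) * (∑ j ∈ Finset.range (k+1), t^(k-j) * c j) := by
            rw [Finset.sum_congr rfl (fun j _ => e2 j), Finset.sum_congr rfl (fun j _ => e3 j)]
    have h3 : ∑ j ∈ Finset.range (k+1), t^(k-j) ≤ (1-t)⁻¹ := by
      have hrefl := Finset.sum_range_reflect (fun j => t^j) (k+1)
      have he : ∀ j ∈ Finset.range (k+1), t^(k+1-1-j) = t^(k-j) := by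
        intro j hj
        have h9 : k+1-1-j = k-j := by omega
        rw [h9]
      rw [Finset.sum_congr rfl he] at hrefl
      rw [hrefl]; exact hgeo (k+1)
    have h4 : 0 ≤ ∑ j ∈ Finset.range (k+1), t^(k-j) * c j :=
      Finset.sum_nonneg (fun j _ => mul_nonneg (by positivity) (hcn j))
    calc ‖gconv μ x k‖^2 ≤ (∑ j ∈ Finset.range (k+1), t^(k-j) * ‖x j‖)^2 :=
          pow_le_pow_left₀ (norm_nonneg _) h1 2
      _ ≤ (∑ j ∈ Finset.range (k+1), t^(k-j)) * (∑ j ∈ Finset.range (k+1), t^(k-j) * c j) := h2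
      _ ≤ (1-t)⁻¹ * (∑ j ∈ Finset.range (k+1), t^(k-j) * c j) :=
          mul_le_mul_of_nonneg_right h3 h4
  -- exact double sum exchange on ranges
  have exch : ∀ K : ℕ, ∑ k ∈ Finset.range K, ∑ j ∈ Finset.range (k+1), t^(k-j) * c j
      = ∑ j ∈ Finset.range K, c j * (∑ i ∈ Finset.range (K-j), t^i) := by
    intro K
    induction K with
    | zero => simp
    | succ K ih =>
      have hT : ∀ j ∈ Finset.range K,
          c j * (∑ i ∈ Finset.range (K+1-j), t^i) =
          c j * (∑ i ∈ Finset.range (K-j), t^i) + t^(K-j) * c j := by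
        intro j hj
        rw [Finset.mem_range] at hj
        have h8 : K+1-j = (K-j)+1 := by omega
        rw [h8, Finset.sum_range_succ]; ring
      have hrhs : ∑ j ∈ Finset.range (K+1), c j * (∑ i ∈ Finset.range (K+1-j), t^i)
          = (∑ j ∈ Finset.range K, c j * (∑ i ∈ Finset.range (K-j), t^i))
            + (∑ j ∈ Finset.range K, t^(K-j) * c j + t^(K-K) * c K) := by
        rw [Finset.sum_range_succ, Finset.sum_congr rfl hT, Finset.sum_add_distrib]
        have h7 : K+1-K = 1 := by omega
        have h6 : K-K = 0 := by omega
        rw [h7, h6, Finset.sum_range_one]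
        ring
      rw [Finset.sum_range_succ, ih, hrhs, Finset.sum_range_succ]
  have bnd : ∀ K : ℕ, ∑ k ∈ Finset.range K, ∑ j ∈ Finset.range (k+1), t^(k-j) * c j
      ≤ (1-t)⁻¹ * sqnorm x := by
    intro K
    rw [exch K]
    calc ∑ j ∈ Finset.range K, c j * (∑ i ∈ Finset.range (K-j), t^i)
        ≤ ∑ j ∈ Finset.range K, c j * (1-t)⁻¹ :=
          Finset.sum_le_sum (fun j _ => mul_le_mul_of_nonneg_left (hgeo _) (hcn j))
      _ = (∑ j ∈ Finset.range K, c j) * (1-t)⁻¹ := by rw [← Finset.sum_mul]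
      _ ≤ sqnorm x * (1-t)⁻¹ := mul_le_mul_of_nonneg_right (hcts _) hinv.le
      _ = (1-t)⁻¹ * sqnorm x := by ring
  have key : sqnorm (gconv μ x) ≤ (1-t)⁻¹ * ((1-t)⁻¹ * sqnorm x) := by
    apply (GB_summable_sq (GB_gconv hμ1 hx)).tsum_le_of_sum_le
    intro s
    obtain ⟨K, hK⟩ := s.exists_nat_subset_range
    calc ∑ k ∈ s, ‖gconv μ x k‖^2 ≤ ∑ k ∈ Finset.range K, ‖gconv μ x k‖^2 :=
          Finset.sum_le_sum_of_subset_of_nonneg hK (fun k _ _ => by positivity)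
      _ ≤ ∑ k ∈ Finset.range K, (1-t)⁻¹ * ∑ j ∈ Finset.range (k+1), t^(k-j) * c j :=
          Finset.sum_le_sum (fun k _ => pw k)
      _ = (1-t)⁻¹ * ∑ k ∈ Finset.range K, ∑ j ∈ Finset.range (k+1), t^(k-j) * c j := by
          rw [Finset.mul_sum]
      _ ≤ (1-t)⁻¹ * ((1-t)⁻¹ * sqnorm x) := mul_le_mul_of_nonneg_left (bnd K) hinv.le
  calc Nn (gconv μ x) = Real.sqrt (sqnorm (gconv μ x)) := rfl
    _ ≤ Real.sqrt ((1-t)⁻¹ * ((1-t)⁻¹ * sqnorm x)) := Real.sqrt_le_sqrt key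
    _ = (1-t)⁻¹ * Nn x := by
        rw [← mul_assoc, Real.sqrt_mul (by positivity), Real.sqrt_mul_self hinv.le]
        rfl

lemma GB_bT {μ : ℂ} (hμ : ‖μ‖ < 1) {x : ℕ → ℂ} (hx : GB x) : GB (bT μ x) := by
  have h1 : GB (gconv μ x) := GB_gconv hμ hx
  exact GB_sub (GB_smul (conj μ) h1) (GB_sh h1)

lemma norm_bT_sq (μ : ℂ) (x : ℕ → ℂ) (k : ℕ) :
    ‖bT μ x k‖^2 = ‖x k‖^2 +
      (1 - ‖μ‖^2) * (‖sh (gconv μ x) k‖^2 - ‖gconv μ x k‖^2) := by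
  have hx : x k = gconv μ x k - μ * sh (gconv μ x) k := x_eq_w_sub μ x k
  have hb : bT μ x k = conj μ * gconv μ x k - sh (gconv μ x) k := rfl
  set u := gconv μ x k
  set v := sh (gconv μ x) k
  have e1 : ∀ z : ℂ, ‖z‖^2 = Complex.normSq z := fun z => by
    rw [Complex.sq_norm]
  rw [hb, hx, e1, e1, e1, e1, e1]
  simp only [Complex.normSq_apply, Complex.sub_re, Complex.sub_im, Complex.mul_re,
    Complex.mul_im, Complex.conj_re, Complex.conj_im]
  ring

lemma tsum_telescope_zero (f : ℕ → ℝ) (hsum : Summable (fun k => f k - f (k+1)))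
    (h0 : f 0 = 0) (hlim : Tendsto f atTop (nhds 0)) : ∑' k, (f k - f (k+1)) = 0 := by
  have h1 := hsum.hasSum.tendsto_sum_nat
  have he : ∀ K, ∑ k ∈ Finset.range K, (f k - f (k+1)) = f 0 - f K :=
    fun K => Finset.sum_range_sub' f K
  have h2 : Tendsto (fun K => ∑ k ∈ Finset.range K, (f k - f (k+1))) atTop (nhds 0) := by
    have h3 : Tendsto (fun K => f 0 - f K) atTop (nhds (f 0 - 0)) :=
      tendsto_const_nhds.sub hlim
    have h4 : Tendsto (fun K => f 0 - f K) atTop (nhds 0) := by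
      simpa [h0] using h3
    exact h4.congr (fun K => (he K).symm)
  exact tendsto_nhds_unique h1 h2

/-- isometry of multiplication by a Blaschke factor, coefficient form -/
lemma Nn_bT_eq {μ : ℂ} (hμ : ‖μ‖ < 1) {x : ℕ → ℂ} (hx : GB x) : Nn (bT μ x) = Nn x := by
  set w := gconv μ x with hw
  have hGw : GB w := GB_gconv hμ hx
  have hGsh : GB (sh w) := GB_sh hGw
  have hf0 : ‖sh w 0‖^2 = (0:ℝ) := by rw [sh_zero]; simp
  have hlim : Tendsto (fun k => ‖sh w k‖^2) atTop (nhds 0) := by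
    have h := GB_tendsto_zero hGsh
    have hn : Tendsto (fun k => ‖sh w k‖) atTop (nhds 0) := by
      have := (continuous_norm.tendsto (0:ℂ)).comp h
      simpa [Function.comp_def] using this
    have := hn.mul hn
    simpa [pow_two] using this
  have hsumF : Summable (fun k => ‖sh w k‖^2 - ‖w k‖^2) :=
    (GB_summable_sq hGsh).sub (GB_summable_sq hGw)
  have htel : ∑' k, (‖sh w k‖^2 - ‖w k‖^2) = 0 := by
    have he : ∀ k : ℕ, ‖sh w k‖^2 - ‖w k‖^2 =
        (fun k => ‖sh w k‖^2) k - (fun k => ‖sh w k‖^2) (k+1) := fun k => by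
      simp only [sh_succ]
    rw [tsum_congr he]
    apply tsum_telescope_zero _ ?_ hf0 hlim
    apply hsumF.congr
    intro k; exact (he k)
  have hpt : ∀ k, ‖bT μ x k‖^2 = ‖x k‖^2 + (1-‖μ‖^2) * (‖sh w k‖^2 - ‖w k‖^2) :=
    norm_bT_sq μ x
  unfold Nn
  congr 1
  calc sqnorm (bT μ x) = ∑' k, (‖x k‖^2 + (1-‖μ‖^2) * (‖sh w k‖^2 - ‖w k‖^2)) :=
        tsum_congr hpt
    _ = sqnorm x + ∑' k, (1-‖μ‖^2) * (‖sh w k‖^2 - ‖w k‖^2) := by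
        exact (GB_summable_sq hx).tsum_add (hsumF.mul_left _)
    _ = sqnorm x := by rw [tsum_mul_left, htel]; ring

end BMS

namespace BMS
open Complex ComplexConjugate Filter

lemma conj_tsum (f : ℕ → ℂ) (h : Summable f) :
    conj (∑' k, f k) = ∑' k, conj (f k) := by
  have := (Complex.conjCLE.toContinuousLinearMap).map_tsum h
  simpa using this

lemma GB_shift (m : ℕ) {x : ℕ → ℂ} (hx : GB x) : GB (fun i => x (i+m)) := by
  obtain ⟨C, ρ, hC, hρ0, hρ1, hb⟩ := hx
  refine ⟨C, ρ, hC, hρ0, hρ1, fun i => ?_⟩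
  calc ‖x (i+m)‖ ≤ C * ρ^(i+m) := hb (i+m)
    _ ≤ C * ρ^i := by
        apply mul_le_mul_of_nonneg_left (pow_le_pow_of_le_one hρ0 hρ1.le (by omega)) hC

lemma GB_summable_mul_conj {x y : ℕ → ℂ} (hx : GB x) (hy : GB y) :
    Summable (fun k => x k * conj (y k)) := by
  obtain ⟨C, ρ, hC, hρ0, hρ1, hb⟩ := hx
  obtain ⟨C', ρ', hC', hρ0', hρ1', hb'⟩ := hy
  apply Summable.of_norm
  have hs : Summable (fun k : ℕ => (C*C') * (ρ*ρ')^k) := by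
    apply Summable.mul_left
    apply summable_geometric_of_lt_one (by positivity) (by nlinarith)
  apply Summable.of_nonneg_of_le (fun k => norm_nonneg _) (fun k => ?_) hs
  rw [norm_mul, RCLike.norm_conj, mul_pow]
  calc ‖x k‖ * ‖y k‖ ≤ (C * ρ^k) * (C' * ρ'^k) := by
        apply mul_le_mul (hb k) (hb' k) (norm_nonneg _) (by positivity)
    _ = C * C' * (ρ^k * ρ'^k) := by ring

section Step

variable (μ : ℂ) (a : ℕ → ℂ)

def Av : ℂ := ∑' k, a k * (conj μ)^k
def a1s : ℕ → ℂ := fun k => ((1 - μ * conj μ) * Av μ a) * μ^k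
def dds : ℕ → ℂ := fun k => a k - a1s μ a k
def Ts (m : ℕ) : ℂ := ∑' i, dds μ a (i+m) * (conj μ)^i
def es : ℕ → ℂ := fun k => -(Ts μ a (k+1))
def ats : ℕ → ℂ := fun k => es μ a k - μ * sh (es μ a) k

variable {μ a}

lemma GB_a1s (hμ : ‖μ‖ < 1) : GB (a1s μ a) := GB_smul _ (GB_geom hμ)

lemma GB_dds (hμ : ‖μ‖ < 1) (ha : GB a) : GB (dds μ a) := GB_sub ha (GB_a1s hμ)

lemma norm_conj' (z : ℂ) : ‖conj z‖ = ‖z‖ := RCLike.norm_conj z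

lemma summable_T (hμ : ‖μ‖ < 1) (ha : GB a) (m : ℕ) :
    Summable (fun i => dds μ a (i+m) * (conj μ)^i) :=
  GB_summable_geom (GB_shift m (GB_dds hμ ha)) (by rw [norm_conj']; exact hμ)

lemma hT_rec (hμ : ‖μ‖ < 1) (ha : GB a) (m : ℕ) :
    Ts μ a m = dds μ a m + conj μ * Ts μ a (m+1) := by
  rw [Ts, (summable_T hμ ha m).tsum_eq_zero_add]
  congr 1
  · simp
  · rw [Ts, ← tsum_mul_left]
    apply tsum_congr
    intro i
    have h : i + 1 + m = i + (m+1) := by omega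
    rw [h, pow_succ]
    ring

lemma mu_conj_norm (hμ : ‖μ‖ < 1) : ‖μ * conj μ‖ < 1 := by
  rw [norm_mul, norm_conj']
  nlinarith [norm_nonneg μ]

lemma sigma_ne (hμ : ‖μ‖ < 1) : (1 : ℂ) - μ * conj μ ≠ 0 := by
  intro h
  have h1 : (1:ℂ) = μ * conj μ := by linear_combination h
  have h2 : ‖(1:ℂ)‖ = ‖μ * conj μ‖ := by rw [← h1]
  rw [norm_one] at h2
  have := mu_conj_norm hμ
  linarith [h2 ▸ this]

lemma hT0 (hμ : ‖μ‖ < 1) (ha : GB a) : Ts μ a 0 = 0 := by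
  have h1 : Ts μ a 0 = ∑' i, dds μ a i * (conj μ)^i := by
    apply tsum_congr; intro i; simp
  have hconj : ‖conj μ‖ < 1 := by rw [norm_conj']; exact hμ
  have h2 : ∑' i, dds μ a i * (conj μ)^i =
      (∑' i, a i * (conj μ)^i) - ∑' i, a1s μ a i * (conj μ)^i := by
    rw [← (GB_summable_geom ha hconj).tsum_sub (GB_summable_geom (GB_a1s hμ) hconj)]
    apply tsum_congr; intro i; rw [dds]; ring
  have h3 : ∑' i, a1s μ a i * (conj μ)^i = Av μ a := by
    have he : ∀ i : ℕ, a1s μ a i * (conj μ)^i =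
        ((1 - μ * conj μ) * Av μ a) * (μ * conj μ)^i := by
      intro i; rw [a1s, mul_pow]; ring
    rw [tsum_congr he, tsum_mul_left, tsum_geometric_of_norm_lt_one (mu_conj_norm hμ)]
    rw [mul_comm (1 - μ * conj μ) (Av μ a), mul_assoc,
      mul_inv_cancel₀ (sigma_ne hμ), mul_one]
  rw [h1, h2, h3, Av, sub_self]

lemma he_rec (hμ : ‖μ‖ < 1) (ha : GB a) (k : ℕ) :
    conj μ * es μ a k - sh (es μ a) k = dds μ a k := by
  cases k with
  | zero =>
    rw [sh_zero, es]
    have h1 := hT_rec hμ ha 0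
    have h2 := hT0 hμ ha
    linear_combination h1 - h2
  | succ k =>
    rw [sh_succ, es, es]
    have h1 := hT_rec hμ ha (k+1)
    linear_combination h1

lemma GB_es (hμ : ‖μ‖ < 1) (ha : GB a) : GB (es μ a) := by
  obtain ⟨C, ρ, hC, hρ0, hρ1, hb⟩ := GB_dds hμ ha
  have hρμ : ρ * ‖μ‖ < 1 := by nlinarith [norm_nonneg μ]
  have hTb : ∀ m, ‖Ts μ a m‖ ≤ (C * (1 - ρ*‖μ‖)⁻¹) * ρ^m := by
    intro m
    have hptb : ∀ i : ℕ, ‖dds μ a (i+m) * (conj μ)^i‖ ≤ (C * ρ^m) * (ρ*‖μ‖)^i := by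
      intro i
      rw [norm_mul, norm_pow, norm_conj', mul_pow]
      calc ‖dds μ a (i+m)‖ * ‖μ‖^i ≤ (C * ρ^(i+m)) * ‖μ‖^i := by
            apply mul_le_mul_of_nonneg_right (hb (i+m)) (by positivity)
        _ = C * ρ^m * (ρ^i * ‖μ‖^i) := by rw [pow_add]; ring
    have hsumb : Summable (fun i : ℕ => (C * ρ^m) * (ρ*‖μ‖)^i) :=
      Summable.mul_left _ (summable_geometric_of_lt_one (by positivity) hρμ)
    have hsumn : Summable (fun i : ℕ => ‖dds μ a (i+m) * (conj μ)^i‖) :=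
      Summable.of_nonneg_of_le (fun i => norm_nonneg _) hptb hsumb
    calc ‖Ts μ a m‖ ≤ ∑' i, ‖dds μ a (i+m) * (conj μ)^i‖ := norm_tsum_le_tsum_norm hsumn
      _ ≤ ∑' i : ℕ, (C * ρ^m) * (ρ*‖μ‖)^i := hsumn.tsum_le_tsum hptb hsumb
      _ = (C * ρ^m) * (1 - ρ*‖μ‖)⁻¹ := by
          rw [tsum_mul_left, tsum_geometric_of_lt_one (by positivity) hρμ]
      _ = (C * (1 - ρ*‖μ‖)⁻¹) * ρ^m := by ring
  have hinv : (0:ℝ) ≤ (1 - ρ*‖μ‖)⁻¹ := by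
    apply inv_nonneg.mpr; linarith
  refine ⟨C * (1 - ρ*‖μ‖)⁻¹ * ρ, ρ, by positivity, hρ0, hρ1, fun k => ?_⟩
  calc ‖es μ a k‖ = ‖Ts μ a (k+1)‖ := by rw [es, norm_neg]
    _ ≤ (C * (1 - ρ*‖μ‖)⁻¹) * ρ^(k+1) := hTb (k+1)
    _ = C * (1 - ρ*‖μ‖)⁻¹ * ρ * ρ^k := by rw [pow_succ]; ring

lemma GB_ats (hμ : ‖μ‖ < 1) (ha : GB a) : GB (ats μ a) :=
  GB_sub (GB_es hμ ha) (GB_smul μ (GB_sh (GB_es hμ ha)))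

lemma he_gconv : es μ a = gconv μ (ats μ a) := by
  apply gconv_unique
  · rw [ats, sh_zero]; ring
  · intro k
    rw [ats, sh_succ]; ring

lemma hdd_bT (hμ : ‖μ‖ < 1) (ha : GB a) (k : ℕ) :
    dds μ a k = bT μ (ats μ a) k := by
  rw [bT, ← he_gconv, he_rec hμ ha]

lemma Nn_dds_eq_ats (hμ : ‖μ‖ < 1) (ha : GB a) : Nn (dds μ a) = Nn (ats μ a) := by
  rw [Nn_congr (hdd_bT hμ ha), Nn_bT_eq hμ (GB_ats hμ ha)]

lemma pyth (hμ : ‖μ‖ < 1) (ha : GB a) :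
    sqnorm a = sqnorm (a1s μ a) + sqnorm (dds μ a) := by
  have hconj : ‖conj μ‖ < 1 := by rw [norm_conj']; exact hμ
  have hcross : ∑' k, (a1s μ a k * conj (dds μ a k)) = 0 := by
    have he : ∀ k : ℕ, a1s μ a k * conj (dds μ a k) =
        ((1 - μ * conj μ) * Av μ a) * conj (dds μ a k * (conj μ)^k) := by
      intro k
      rw [map_mul, map_pow, Complex.conj_conj, a1s]
      ring
    rw [tsum_congr he, tsum_mul_left, ← conj_tsum _ (GB_summable_geom (GB_dds hμ ha) hconj)]
    have hz : ∑' (k : ℕ), dds μ a k * (conj μ)^k = 0 := by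
      have h1 : Ts μ a 0 = ∑' i, dds μ a i * (conj μ)^i := by
        apply tsum_congr; intro i; simp
      rw [← h1, hT0 hμ ha]
    rw [hz, map_zero, mul_zero]
  have hsummul : Summable (fun k => a1s μ a k * conj (dds μ a k)) :=
    GB_summable_mul_conj (GB_a1s hμ) (GB_dds hμ ha)
  have hre : Summable (fun k => (a1s μ a k * conj (dds μ a k)).re) :=
    (Complex.hasSum_re hsummul.hasSum).summable
  have hre0 : ∑' k, (a1s μ a k * conj (dds μ a k)).re = 0 := by
    rw [← Complex.re_tsum hsummul, hcross, Complex.zero_re]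
  have hpt : ∀ k, ‖a k‖^2 = ‖a1s μ a k‖^2 + (2 * (a1s μ a k * conj (dds μ a k)).re
      + ‖dds μ a k‖^2) := by
    intro k
    have hsplit : a k = a1s μ a k + dds μ a k := by rw [dds]; ring
    have e1 : ∀ z : ℂ, ‖z‖^2 = Complex.normSq z := fun z => by
      rw [Complex.sq_norm]
    rw [hsplit, e1, e1, e1, Complex.normSq_add]
    ring
  have hs1 := GB_summable_sq (GB_a1s hμ (a := a))
  have hs2 := GB_summable_sq (GB_dds hμ ha)
  calc sqnorm a = ∑' k, (‖a1s μ a k‖^2 + (2 * (a1s μ a k * conj (dds μ a k)).re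
        + ‖dds μ a k‖^2)) := tsum_congr hpt
    _ = sqnorm (a1s μ a) + ∑' k, (2 * (a1s μ a k * conj (dds μ a k)).re + ‖dds μ a k‖^2) := by
        rw [hs1.tsum_add ((hre.mul_left 2).add hs2)]; rfl
    _ = sqnorm (a1s μ a) + (2 * ∑' k, (a1s μ a k * conj (dds μ a k)).re + sqnorm (dds μ a)) := by
        rw [(hre.mul_left 2).tsum_add hs2, tsum_mul_left]; rfl
    _ = sqnorm (a1s μ a) + sqnorm (dds μ a) := by rw [hre0]; ring

end Step

end BMS

namespace BMS
open Complex ComplexConjugate Filter PowerSeries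

lemma gconv_sub (μ : ℂ) (x y : ℕ → ℂ) (k : ℕ) :
    gconv μ (fun j => x j - y j) k = gconv μ x k - gconv μ y k := by
  simp only [gconv, mul_sub, Finset.sum_sub_distrib]

lemma gconv_smul (μ c : ℂ) (x : ℕ → ℂ) (k : ℕ) :
    gconv μ (fun j => c * x j) k = c * gconv μ x k := by
  simp only [gconv, Finset.mul_sum]
  apply Finset.sum_congr rfl
  intro j _; ring

lemma gconv_sh (μ : ℂ) (x : ℕ → ℂ) : gconv μ (sh x) = sh (gconv μ x) := by
  symm
  apply gconv_unique
  · rw [sh_zero, sh_zero]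
  · intro k
    cases k with
    | zero => rw [sh_succ, sh_zero, gconv_zero, sh_succ]; ring
    | succ k => rw [sh_succ, sh_succ, gconv_succ, sh_succ]

lemma gconv_bT (μ : ℂ) (z : ℕ → ℂ) (k : ℕ) :
    gconv μ (fun j => conj μ * z j - sh z j) k = bT μ z k := by
  rw [gconv_sub, gconv_smul, bT]
  congr 1
  rw [gconv_sh]

def QP (L : List ℂ) : PowerSeries ℂ :=
  (L.map (fun ν => 1 - PowerSeries.C ν * PowerSeries.X)).prod

lemma QP_nil : QP ([] : List ℂ) = 1 := by simp [QP]

lemma QP_cons (ν : ℂ) (L : List ℂ) :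
    QP (ν :: L) = (1 - PowerSeries.C ν * PowerSeries.X) * QP L := by
  simp [QP]

lemma coeff_Xmul (V : PowerSeries ℂ) (M : ℕ) :
    PowerSeries.coeff M (PowerSeries.X * V) =
      if M = 0 then 0 else PowerSeries.coeff (M-1) V := by
  cases M with
  | zero =>
    simp [PowerSeries.coeff_zero_eq_constantCoeff, map_mul]
  | succ M =>
    rw [PowerSeries.coeff_succ_X_mul]
    simp

lemma coeff_one_sub_CXmul (c : ℂ) (V : PowerSeries ℂ) (M : ℕ) :
    PowerSeries.coeff M ((1 - PowerSeries.C c * PowerSeries.X) * V) =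
      PowerSeries.coeff M V - c * (if M = 0 then 0 else PowerSeries.coeff (M-1) V) := by
  rw [sub_mul, one_mul, map_sub, mul_assoc, PowerSeries.coeff_C_mul, coeff_Xmul]

lemma coeff_Csub_Xmul (c : ℂ) (V : PowerSeries ℂ) (M : ℕ) :
    PowerSeries.coeff M ((PowerSeries.C c - PowerSeries.X) * V) =
      c * PowerSeries.coeff M V - (if M = 0 then 0 else PowerSeries.coeff (M-1) V) := by
  rw [sub_mul, map_sub, PowerSeries.coeff_C_mul, coeff_Xmul]

lemma coeff_QP_zero : ∀ (L : List ℂ) (i : ℕ), L.length < i →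
    PowerSeries.coeff i (QP L) = 0 := by
  intro L
  induction L with
  | nil =>
    intro i hi
    rw [QP_nil, PowerSeries.coeff_one, if_neg (by omega)]
  | cons ν L ih =>
    intro i hi
    rw [QP_cons, coeff_one_sub_CXmul, ih i (by simp at hi ⊢; omega),
      if_neg (by omega), ih (i-1) (by simp at hi ⊢; omega)]
    simp

section StepRec

variable {μ : ℂ} {a : ℕ → ℂ}

lemma step_rec (hμ : ‖μ‖ < 1) (ha : GB a) (L' : List ℂ)
    (hrec : ∀ M, (μ :: L').length ≤ M →
      PowerSeries.coeff M (QP (μ :: L') * PowerSeries.mk a) = 0) :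
    ∀ M, L'.length ≤ M →
      PowerSeries.coeff M (QP L' * PowerSeries.mk (ats μ a)) = 0 := by
  classical
  set σA : ℂ := (1 - μ * conj μ) * Av μ a with hσA
  have hE1 : PowerSeries.mk (ats μ a) =
      (1 - PowerSeries.C μ * PowerSeries.X) * PowerSeries.mk (es μ a) := by
    apply PowerSeries.ext
    intro M
    rw [coeff_one_sub_CXmul, PowerSeries.coeff_mk, PowerSeries.coeff_mk]
    cases M with
    | zero => simp [ats, sh_zero]
    | succ M => simp [ats, sh_succ, PowerSeries.coeff_mk]
  have hE2 : (PowerSeries.C (conj μ) - PowerSeries.X) * PowerSeries.mk (es μ a) =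
      PowerSeries.mk a - PowerSeries.mk (a1s μ a) := by
    apply PowerSeries.ext
    intro M
    rw [coeff_Csub_Xmul, PowerSeries.coeff_mk, map_sub, PowerSeries.coeff_mk,
      PowerSeries.coeff_mk]
    have h := he_rec hμ ha M
    cases M with
    | zero =>
      rw [if_pos rfl]
      rw [sh_zero] at h
      rw [sub_zero]
      have h2 : conj μ * es μ a 0 = dds μ a 0 := by rw [← h]; ring
      rw [h2, dds, PowerSeries.coeff_mk]
    | succ M =>
      rw [if_neg (by omega)]
      rw [sh_succ] at h
      simp only [Nat.add_sub_cancel, PowerSeries.coeff_mk]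
      rw [h, dds]
  have hE3 : (1 - PowerSeries.C μ * PowerSeries.X) * PowerSeries.mk (fun k => μ^k) = 1 := by
    apply PowerSeries.ext
    intro M
    rw [coeff_one_sub_CXmul, PowerSeries.coeff_mk, PowerSeries.coeff_one]
    cases M with
    | zero => simp
    | succ M =>
      rw [if_neg (by omega), if_neg (by omega)]
      simp only [Nat.add_sub_cancel, PowerSeries.coeff_mk]
      rw [pow_succ]; ring
  have hE4 : PowerSeries.mk (a1s μ a) = PowerSeries.C σA * PowerSeries.mk (fun k => μ^k) := by
    apply PowerSeries.ext
    intro M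
    rw [PowerSeries.coeff_mk, PowerSeries.coeff_C_mul, PowerSeries.coeff_mk, a1s, hσA]
  have hQPc : QP (μ :: L') = (1 - PowerSeries.C μ * PowerSeries.X) * QP L' := QP_cons μ L'
  have hkey : (PowerSeries.C (conj μ) - PowerSeries.X) *
        (QP L' * PowerSeries.mk (ats μ a)) =
      QP (μ :: L') * PowerSeries.mk a - PowerSeries.C σA * QP L' := by
    calc (PowerSeries.C (conj μ) - PowerSeries.X) * (QP L' * PowerSeries.mk (ats μ a))
        = (QP L' * (1 - PowerSeries.C μ * PowerSeries.X)) *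
          ((PowerSeries.C (conj μ) - PowerSeries.X) * PowerSeries.mk (es μ a)) := by
          rw [hE1]; ring
      _ = (QP L' * (1 - PowerSeries.C μ * PowerSeries.X)) *
          (PowerSeries.mk a - PowerSeries.mk (a1s μ a)) := by rw [hE2]
      _ = QP (μ :: L') * PowerSeries.mk a -
          (QP L' * (1 - PowerSeries.C μ * PowerSeries.X)) * PowerSeries.mk (a1s μ a) := by
          rw [hQPc]; ring
      _ = QP (μ :: L') * PowerSeries.mk a - PowerSeries.C σA * QP L' := by
          rw [hE4, show (QP L' * (1 - PowerSeries.C μ * PowerSeries.X)) *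
            (PowerSeries.C σA * PowerSeries.mk (fun k => μ^k)) =
            PowerSeries.C σA * QP L' *
            ((1 - PowerSeries.C μ * PowerSeries.X) * PowerSeries.mk (fun k => μ^k)) from by
              ring, hE3, mul_one]
  set u : ℕ → ℂ := fun M => PowerSeries.coeff M (QP L' * PowerSeries.mk (ats μ a)) with hu
  have hustep : ∀ M, L'.length ≤ M → u M = conj μ * u (M+1) := by
    intro M hM
    have h1 := congrArg (PowerSeries.coeff (M+1)) hkey
    rw [coeff_Csub_Xmul, map_sub] at h1
    have h2 : PowerSeries.coeff (M+1) (QP (μ :: L') * PowerSeries.mk a) = 0 :=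
      hrec (M+1) (by simp only [List.length_cons]; omega)
    have h3 : PowerSeries.coeff (M+1) (PowerSeries.C σA * QP L') = 0 := by
      rw [PowerSeries.coeff_C_mul, coeff_QP_zero L' (M+1) (by omega), mul_zero]
    rw [h2, h3, if_neg (by omega), sub_zero] at h1
    simp only [Nat.add_sub_cancel] at h1
    have : conj μ * u (M+1) - u M = 0 := h1
    linear_combination -this
  obtain ⟨C, ρ, hC0, hρ0, hρ1, hbats⟩ := GB_ats hμ ha
  set n' := L'.length with hn'
  set Q1 : ℝ := ∑ i ∈ Finset.range (n'+1), ‖PowerSeries.coeff i (QP L')‖ with hQ1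
  have hQ1n : 0 ≤ Q1 := Finset.sum_nonneg (fun i _ => norm_nonneg _)
  have hubound : ∀ M, n' ≤ M → ‖u M‖ ≤ Q1 * (C * ρ^(M - n')) := by
    intro M hM
    have h1 : u M = ∑ i ∈ Finset.range (M+1),
        PowerSeries.coeff i (QP L') * ats μ a (M - i) := by
      rw [hu]
      simp only
      rw [PowerSeries.coeff_mul,
        Finset.Nat.sum_antidiagonal_eq_sum_range_succ_mk
          (fun p => PowerSeries.coeff p.1 (QP L') * PowerSeries.coeff p.2
            (PowerSeries.mk (ats μ a))) M]
      apply Finset.sum_congr rfl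
      intro i _
      rw [PowerSeries.coeff_mk]
    have h2 : u M = ∑ i ∈ Finset.range (n'+1),
        PowerSeries.coeff i (QP L') * ats μ a (M - i) := by
      rw [h1]
      symm
      apply Finset.sum_subset
      · apply Finset.range_subset_range.mpr; omega
      · intro i _ hi2
        rw [Finset.mem_range, not_lt] at hi2
        rw [coeff_QP_zero L' i (by omega), zero_mul]
    rw [h2]
    calc ‖∑ i ∈ Finset.range (n'+1), PowerSeries.coeff i (QP L') * ats μ a (M - i)‖
        ≤ ∑ i ∈ Finset.range (n'+1), ‖PowerSeries.coeff i (QP L')‖ * (C * ρ^(M - n')) := by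
          refine le_trans (norm_sum_le _ _) (Finset.sum_le_sum fun i hi => ?_)
          rw [Finset.mem_range] at hi
          rw [norm_mul]
          apply mul_le_mul_of_nonneg_left ?_ (norm_nonneg _)
          calc ‖ats μ a (M-i)‖ ≤ C * ρ^(M-i) := hbats (M-i)
            _ ≤ C * ρ^(M-n') := by
                apply mul_le_mul_of_nonneg_left
                  (pow_le_pow_of_le_one hρ0 hρ1.le (by omega)) hC0
      _ = Q1 * (C * ρ^(M - n')) := by rw [← Finset.sum_mul]
  have hutend : Tendsto u atTop (nhds 0) := by
    apply squeeze_zero_norm' ?_ (a := fun M => Q1 * (C * ρ^(M - n')))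
    · have h4 : Tendsto (fun M : ℕ => ρ^(M - n')) atTop (nhds 0) :=
        (tendsto_pow_atTop_nhds_zero_of_lt_one hρ0 hρ1).comp
          (Filter.tendsto_sub_atTop_nat n')
      have h5 := (h4.const_mul C).const_mul Q1
      simpa using h5
    · filter_upwards [eventually_ge_atTop n'] with M hM using hubound M hM
  intro M hM
  have hrep : ∀ K, u M = (conj μ)^K * u (M + K) := by
    intro K
    induction K with
    | zero => simp
    | succ K ih =>
      rw [ih, hustep (M+K) (le_trans hM (by omega))]
      rw [show M + (K+1) = (M + K) + 1 from by omega, pow_succ]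
      ring
  have hle : ∀ K, ‖u M‖ ≤ ‖u (K + M)‖ := by
    intro K
    have h6 := hrep K
    rw [show M + K = K + M from by omega] at h6
    rw [h6, norm_mul]
    apply mul_le_of_le_one_left (norm_nonneg _)
    rw [norm_pow]
    apply pow_le_one₀ (norm_nonneg _)
    rw [norm_conj']; exact hμ.le
  have htend2 : Tendsto (fun K => ‖u (K + M)‖) atTop (nhds 0) := by
    have h5 := hutend.comp (tendsto_add_atTop_nat M)
    have h7 := (continuous_norm.tendsto (0:ℂ)).comp h5
    simpa [Function.comp_def] using h7
  have h8 : ‖u M‖ ≤ 0 := ge_of_tendsto' htend2 hle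
  exact norm_le_zero_iff.mp h8

end StepRec

end BMS

namespace BMS
open Complex ComplexConjugate Filter

theorem main_induction (r : ℝ) (hr0 : 0 ≤ r) (hr1 : r < 1) :
    ∀ (L : List ℂ) (a : ℕ → ℂ), (∀ ν ∈ L, ‖ν‖ ≤ r) → GB a →
    (∀ M, L.length ≤ M → PowerSeries.coeff M (QP L * PowerSeries.mk a) = 0) →
    Nn (Dop a) ≤ (5/2) * ((L.length : ℝ)/(1-r)) * Nn a := by
  intro L
  induction L with
  | nil =>
    intro a _ ha hrec
    have hz : ∀ k, a k = 0 := by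
      intro k
      have h := hrec k (by simp)
      rwa [QP_nil, one_mul, PowerSeries.coeff_mk] at h
    have h1 : Nn (Dop a) = 0 := by
      rw [Nn_congr (x := Dop a) (y := fun _ => (0:ℂ)) (fun k => by simp [Dop, hz]), Nn_zero]
    rw [h1]
    simp
  | cons μ L' IH =>
    intro a hbnd ha hrec
    have hμr : ‖μ‖ ≤ r := hbnd μ List.mem_cons_self
    have hμ1 : ‖μ‖ < 1 := lt_of_le_of_lt hμr hr1
    have hGa1 : GB (a1s μ a) := GB_a1s hμ1
    have hGdd : GB (dds μ a) := GB_dds hμ1 ha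
    have hGat : GB (ats μ a) := GB_ats hμ1 ha
    have hGes : GB (es μ a) := GB_es hμ1 ha
    have hrec' := step_rec hμ1 ha L' hrec
    have hIH := IH (ats μ a) (fun ν hν => hbnd ν (List.mem_cons_of_mem μ hν)) hGat hrec'
    have hr1' : (0:ℝ) < 1 - r := by linarith
    have hinvr : (0:ℝ) ≤ (1-r)⁻¹ := by positivity
    have ht1 : (0:ℝ) < 1 - ‖μ‖ := by linarith
    -- bound for the derivative of the geometric part
    have hgeoconv : ∀ k, gconv μ (fun j => μ^j) k = ((k:ℂ)+1) * μ^k := by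
      intro k
      rw [gconv]
      have he : ∀ j ∈ Finset.range (k+1), μ^(k-j) * μ^j = μ^k := by
        intro j hj; rw [Finset.mem_range] at hj; rw [← pow_add]; congr 1; omega
      rw [Finset.sum_congr rfl he, Finset.sum_const, Finset.card_range, nsmul_eq_mul]
      push_cast; ring
    have hDa1 : ∀ k, Dop (a1s μ a) k =
        ((1 - μ*conj μ) * Av μ a * μ) * gconv μ (fun j => μ^j) k := by
      intro k; rw [Dop, a1s, hgeoconv k, pow_succ]; ring
    have h2 : Nn (Dop (a1s μ a)) ≤ (1-r)⁻¹ * Nn (a1s μ a) := by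
      rw [Nn_congr hDa1, Nn_smul]
      have hbg : Nn (gconv μ (fun j => μ^j)) ≤ (1-r)⁻¹ * Nn (fun j => μ^j) :=
        Nn_gconv_le hμr hr1 (GB_geom hμ1)
      have hNa1 : Nn (a1s μ a) = ‖(1 - μ*conj μ) * Av μ a‖ * Nn (fun j => μ^j) :=
        Nn_smul _ _
      calc ‖(1 - μ*conj μ) * Av μ a * μ‖ * Nn (gconv μ (fun j => μ^j))
          ≤ ‖(1 - μ*conj μ) * Av μ a‖ * Nn (gconv μ (fun j => μ^j)) := by
            apply mul_le_mul_of_nonneg_right ?_ (Nn_nonneg _)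
            rw [norm_mul]
            nlinarith [norm_nonneg ((1 - μ*conj μ) * Av μ a), norm_nonneg μ]
        _ ≤ ‖(1 - μ*conj μ) * Av μ a‖ * ((1-r)⁻¹ * Nn (fun j => μ^j)) :=
            mul_le_mul_of_nonneg_left hbg (norm_nonneg _)
        _ = (1-r)⁻¹ * (‖(1 - μ*conj μ) * Av μ a‖ * Nn (fun j => μ^j)) := by ring
        _ = (1-r)⁻¹ * Nn (a1s μ a) := by rw [hNa1]
    -- derivative of the Blaschke part
    set σ : ℂ := 1 - μ * conj μ with hσdef
    have hdds_e : ∀ k, dds μ a k = conj μ * es μ a k - sh (es μ a) k :=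
      fun k => (he_rec hμ1 ha k).symm
    set v : ℕ → ℂ := fun k =>
      (conj μ * Dop (ats μ a) k - sh (Dop (ats μ a)) k) - σ * es μ a k with hvdef
    have hvid : Dop (dds μ a) = gconv μ v := by
      apply gconv_unique
      · show Dop (dds μ a) 0 = v 0
        rw [hvdef]
        simp only [Dop, sh_zero]
        rw [hdds_e 1]
        simp only [ats, sh_succ, sh_zero, hσdef]
        push_cast; ring
      · intro k
        show Dop (dds μ a) (k+1) = μ * Dop (dds μ a) k + v (k+1)
        rw [hvdef]
        simp only [Dop, sh_succ]
        rw [hdds_e (k+2), hdds_e (k+1)]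
        simp only [ats, sh_succ, hσdef]
        push_cast; ring
    have hsplit3 : ∀ k, Dop (dds μ a) k = bT μ (Dop (ats μ a)) k -
        σ * gconv μ (es μ a) k := by
      intro k
      rw [hvid, hvdef]
      have : (fun j => (conj μ * Dop (ats μ a) j - sh (Dop (ats μ a)) j) - σ * es μ a j)
          = (fun j => (fun i => conj μ * Dop (ats μ a) i - sh (Dop (ats μ a)) i) j
            - (fun i => σ * es μ a i) j) := rfl
      rw [this, gconv_sub, gconv_bT, gconv_smul]
    have hNes : Nn (es μ a) ≤ (1-‖μ‖)⁻¹ * Nn (ats μ a) := by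
      have h9 : Nn (es μ a) = Nn (gconv μ (ats μ a)) := by
        apply Nn_congr; intro k; rw [he_gconv]
      rw [h9]
      exact Nn_gconv_le (le_refl ‖μ‖) hμ1 hGat
    have hσnorm : ‖σ‖ = 1 - ‖μ‖^2 := by
      rw [hσdef, Complex.mul_conj]
      rw [show (1 : ℂ) - (Complex.normSq μ : ℝ) = ((1 - Complex.normSq μ : ℝ) : ℂ) from by
        push_cast; ring]
      rw [Complex.norm_real, Real.norm_eq_abs, _root_.abs_of_nonneg]
      · rw [Complex.normSq_eq_norm_sq]
      · rw [Complex.normSq_eq_norm_sq]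
        have := Complex.sq_norm μ
        nlinarith [norm_nonneg μ, hμ1]
    have h3 : Nn (Dop (dds μ a)) ≤ Nn (Dop (ats μ a)) +
        ((1-‖μ‖^2) * ((1-‖μ‖)⁻¹ * ((1-‖μ‖)⁻¹ * Nn (ats μ a)))) := by
      rw [Nn_congr hsplit3]
      have hA := Nn_sub_le' (GB_bT hμ1 (GB_Dop hGat))
        (GB_smul σ (GB_gconv hμ1 hGes))
      rw [Nn_bT_eq hμ1 (GB_Dop hGat), Nn_smul] at hA
      refine le_trans hA ?_
      apply add_le_add_right
      rw [hσnorm]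
      have h10 : Nn (gconv μ (es μ a)) ≤ (1-‖μ‖)⁻¹ * Nn (es μ a) :=
        Nn_gconv_le (le_refl ‖μ‖) hμ1 hGes
      have h11 : Nn (gconv μ (es μ a)) ≤ (1-‖μ‖)⁻¹ * ((1-‖μ‖)⁻¹ * Nn (ats μ a)) := by
        refine le_trans h10 ?_
        apply mul_le_mul_of_nonneg_left hNes (by positivity)
      apply mul_le_mul_of_nonneg_left h11
      nlinarith [norm_nonneg μ]
    have hcoef : (1-‖μ‖^2) * ((1-‖μ‖)⁻¹ * (1-‖μ‖)⁻¹) ≤ 2 * (1-r)⁻¹ := by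
      set t := ‖μ‖ with htdef
      have ht0 : 0 ≤ t := norm_nonneg μ
      have key : (1-t^2) * ((1-t)⁻¹ * (1-t)⁻¹) = (1+t) * (1-t)⁻¹ := by
        field_simp
        ring
      rw [key]
      rw [show (2:ℝ) * (1-r)⁻¹ = 2 / (1-r) from by ring,
        show (1+t) * (1-t)⁻¹ = (1+t)/(1-t) from by ring]
      rw [div_le_div_iff₀ ht1 hr1']
      nlinarith [mul_nonneg (show (0:ℝ) ≤ 3 - r by linarith)
        (show (0:ℝ) ≤ r - t by linarith), sq_nonneg (1-r)]
    have h3' : Nn (Dop (dds μ a)) ≤ Nn (Dop (ats μ a)) +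
        (2 * (1-r)⁻¹) * Nn (ats μ a) := by
      refine le_trans h3 ?_
      apply add_le_add_right
      have := mul_le_mul_of_nonneg_right hcoef (Nn_nonneg (ats μ a))
      calc (1-‖μ‖^2) * ((1-‖μ‖)⁻¹ * ((1-‖μ‖)⁻¹ * Nn (ats μ a)))
          = ((1-‖μ‖^2) * ((1-‖μ‖)⁻¹ * (1-‖μ‖)⁻¹)) * Nn (ats μ a) := by ring
        _ ≤ (2 * (1-r)⁻¹) * Nn (ats μ a) := this
    -- combine
    have hsplit2 : ∀ k, Dop a k = Dop (a1s μ a) k + Dop (dds μ a) k := by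
      intro k; simp only [Dop, dds]; ring
    have h1 : Nn (Dop a) ≤ Nn (Dop (a1s μ a)) + Nn (Dop (dds μ a)) := by
      rw [Nn_congr hsplit2]; exact Nn_add_le (GB_Dop hGa1) (GB_Dop hGdd)
    have h5 : Nn a ^ 2 = Nn (a1s μ a)^2 + Nn (ats μ a)^2 := by
      rw [sq_Nn, sq_Nn, sq_Nn, pyth hμ1 ha]
      congr 1
      rw [← sq_Nn, ← sq_Nn, Nn_dds_eq_ats hμ1 ha]
    set X := Nn (a1s μ a) with hX
    set Y := Nn (ats μ a) with hY
    set m : ℝ := (L'.length : ℝ) with hm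
    have hm0 : 0 ≤ m := by rw [hm]; positivity
    have hXn : 0 ≤ X := Nn_nonneg _
    have hYn : 0 ≤ Y := Nn_nonneg _
    have hNa : 0 ≤ Nn a := Nn_nonneg _
    have htot : Nn (Dop a) ≤ (1-r)⁻¹ * (X + (5/2*m + 2) * Y) := by
      have hIH' : Nn (Dop (ats μ a)) ≤ (1-r)⁻¹ * (5/2*m) * Y := by
        refine le_trans hIH ?_
        rw [show (5:ℝ)/2 * (m/(1-r)) * Y = (1-r)⁻¹ * (5/2*m) * Y from by ring]
      calc Nn (Dop a) ≤ Nn (Dop (a1s μ a)) + Nn (Dop (dds μ a)) := h1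
        _ ≤ ((1-r)⁻¹ * X) + ((1-r)⁻¹ * (5/2*m) * Y + (2 * (1-r)⁻¹) * Y) := by
            apply add_le_add h2 (le_trans h3' (by linarith [hIH']))
        _ = (1-r)⁻¹ * (X + (5/2*m + 2) * Y) := by ring
    have hXY : X + (5/2*m + 2) * Y ≤ (5/2*(m+1)) * Nn a := by
      have hsq : (X + (5/2*m+2)*Y)^2 ≤ ((5/2*(m+1)) * Nn a)^2 := by
        have h12 : ((5:ℝ)/2*(m+1))^2 * (Nn a)^2 = (5/2*(m+1))^2 * (X^2 + Y^2) := by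
          rw [h5]
        rw [show ((5:ℝ)/2*(m+1) * Nn a)^2 = (5/2*(m+1))^2 * (Nn a)^2 from by ring, h12]
        have hident : ((5:ℝ)/2*(m+1))^2 * (X^2+Y^2) - (X + (5/2*m+2)*Y)^2
            = ((5/2*m+2)*X - Y)^2 + (5/2*m+5/4)*(X^2+Y^2) := by ring
        linarith [sq_nonneg ((5/2*m+2)*X - Y),
          mul_nonneg (show (0:ℝ) ≤ 5/2*m+5/4 by linarith)
            (add_nonneg (sq_nonneg X) (sq_nonneg Y)), hident]
      have h13 := Real.sqrt_le_sqrt hsq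
      rw [Real.sqrt_sq (by positivity), Real.sqrt_sq (by positivity)] at h13
      exact h13
    have hlen : (((μ :: L').length : ℕ) : ℝ) = m + 1 := by
      rw [List.length_cons]; push_cast; ring
    rw [hlen]
    calc Nn (Dop a) ≤ (1-r)⁻¹ * (X + (5/2*m + 2) * Y) := htot
      _ ≤ (1-r)⁻¹ * ((5/2*(m+1)) * Nn a) := mul_le_mul_of_nonneg_left hXY hinvr
      _ = 5/2 * ((m+1)/(1-r)) * Nn a := by ring

end BMS

namespace BMS
open Complex ComplexConjugate Filter Polynomial

lemma iteratedDeriv_polyeval (p : Polynomial ℂ) (k : ℕ) :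
    iteratedDeriv k (fun z => p.eval z) = fun z => (Polynomial.derivative^[k] p).eval z := by
  induction k with
  | zero => simp
  | succ k ih =>
    rw [iteratedDeriv_succ, ih, Function.iterate_succ_apply']
    funext z
    exact Polynomial.deriv _

lemma iterate_derivative_coeff_zero (k : ℕ) (p : Polynomial ℂ) :
    (Polynomial.derivative^[k] p).coeff 0 = (k.factorial : ℂ) * p.coeff k := by
  induction k generalizing p with
  | zero => simp
  | succ k ih =>
    rw [Function.iterate_succ_apply, ih, Polynomial.coeff_derivative, Nat.factorial_succ]
    push_cast
    ring

lemma coef_polyeval (p : Polynomial ℂ) (k : ℕ) : coef (fun z => p.eval z) k = p.coeff k := by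
  rw [coef, iteratedDeriv_polyeval]
  show Polynomial.eval 0 (Polynomial.derivative^[k] p) / ((k.factorial : ℕ) : ℂ) = p.coeff k
  rw [← Polynomial.coeff_zero_eq_eval_zero, iterate_derivative_coeff_zero]
  have h : ((k.factorial : ℕ) : ℂ) ≠ 0 := by
    exact_mod_cast Nat.cast_ne_zero.mpr (Nat.factorial_ne_zero k)
  field_simp

lemma memH2_polyeval (p : Polynomial ℂ) : MemH2 (fun z => p.eval z) := by
  constructor
  · exact ((p.differentiable.differentiableOn).analyticOnNhd Metric.isOpen_ball).analyticOn
  · apply summable_of_ne_finset_zero (s := Finset.range (p.natDegree + 1))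
    intro k hk
    rw [Finset.mem_range, not_lt] at hk
    rw [coef_polyeval, Polynomial.coeff_eq_zero_of_natDegree_lt (by omega)]
    simp

lemma coef_deriv (g : ℂ → ℂ) (k : ℕ) : coef (deriv g) k = ((k:ℂ)+1) * coef g (k+1) := by
  rw [coef, coef, ← iteratedDeriv_succ']
  rw [Nat.factorial_succ]
  push_cast
  have h1 : ((k.factorial : ℕ) : ℂ) ≠ 0 := by
    exact_mod_cast Nat.cast_ne_zero.mpr (Nat.factorial_ne_zero k)
  have h2 : ((k:ℂ) + 1) ≠ 0 := Nat.cast_add_one_ne_zero k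
  field_simp

section Reversal

variable {n : ℕ} (l : Fin n → ℂ)

lemma reflect_linear (c : ℂ) :
    Polynomial.reflect 1 (Polynomial.C c - Polynomial.X) =
      Polynomial.C c * Polynomial.X - 1 := by
  apply Polynomial.ext
  intro i
  match i with
  | 0 =>
    rw [Polynomial.coeff_reflect, Polynomial.revAt_le (by omega)]
    simp [Polynomial.coeff_one, Polynomial.coeff_C_mul, Polynomial.coeff_X,
      Polynomial.coeff_C]
  | 1 =>
    rw [Polynomial.coeff_reflect, Polynomial.revAt_le (by omega)]
    simp [Polynomial.coeff_one, Polynomial.coeff_C_mul, Polynomial.coeff_X,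
      Polynomial.coeff_C]
  | (i+2) =>
    rw [Polynomial.coeff_reflect, Polynomial.revAt_eq_self_of_lt (by omega)]
    simp [Polynomial.coeff_one, Polynomial.coeff_C_mul, Polynomial.coeff_X,
      Polynomial.coeff_C]

lemma natDegree_linear_le (c : ℂ) : (Polynomial.C c - Polynomial.X).natDegree ≤ 1 := by
  refine le_trans (Polynomial.natDegree_sub_le _ _) ?_
  simp [Polynomial.natDegree_C]

lemma natDegree_prod_lin_le (s : Finset (Fin n)) :
    (∏ i ∈ s, (Polynomial.C (l i) - Polynomial.X)).natDegree ≤ s.card := by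
  have h := Polynomial.natDegree_prod_le s (fun i => Polynomial.C (l i) - Polynomial.X)
  have h2 : ∑ i ∈ s, (Polynomial.C (l i) - Polynomial.X).natDegree ≤ s.card := by
    rw [Finset.card_eq_sum_ones]
    exact Finset.sum_le_sum (fun i _ => natDegree_linear_le (l i))
  omega

lemma reflect_prod_lin (s : Finset (Fin n)) :
    Polynomial.reflect s.card (∏ i ∈ s, (Polynomial.C (l i) - Polynomial.X)) =
      ∏ i ∈ s, (Polynomial.C (l i) * Polynomial.X - 1) := by
  classical
  induction s using Finset.induction_on with
  | empty => simp [Polynomial.reflect_one]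
  | @insert j s hj ih =>
    rw [Finset.prod_insert hj, Finset.prod_insert hj, Finset.card_insert_of_notMem hj]
    rw [show s.card + 1 = 1 + s.card from by omega]
    rw [Polynomial.reflect_mul _ _ (natDegree_linear_le (l j)) (natDegree_prod_lin_le l s)]
    rw [reflect_linear, ih]

lemma Q_coeff_eq (j : ℕ) (hj : j ≤ n) :
    (∏ i : Fin n, (1 - Polynomial.C (conj (l i)) * Polynomial.X)).coeff j =
      (-1:ℂ)^n * conj ((∏ i : Fin n, (Polynomial.C (l i) - Polynomial.X)).coeff (n - j)) := by
  classical
  have hcard : (Finset.univ : Finset (Fin n)).card = n := by simp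
  have h1 : Polynomial.map (starRingEnd ℂ)
      (Polynomial.reflect n (∏ i : Fin n, (Polynomial.C (l i) - Polynomial.X))) =
      (-1:Polynomial ℂ)^n * ∏ i : Fin n, (1 - Polynomial.C (conj (l i)) * Polynomial.X) := by
    have hrefl := reflect_prod_lin l Finset.univ
    rw [hcard] at hrefl
    rw [hrefl, Polynomial.map_prod]
    have h2 : ∀ i : Fin n, Polynomial.map (starRingEnd ℂ)
        (Polynomial.C (l i) * Polynomial.X - 1) =
        (-1) * (1 - Polynomial.C (conj (l i)) * Polynomial.X) := by
      intro i
      rw [Polynomial.map_sub, Polynomial.map_mul, Polynomial.map_C, Polynomial.map_X,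
        Polynomial.map_one]
      ring
    rw [Finset.prod_congr rfl (fun i _ => h2 i), Finset.prod_mul_distrib,
      Finset.prod_const, hcard]
  have h3 := congrArg (fun q => Polynomial.coeff q j) h1
  rw [Polynomial.coeff_map, Polynomial.coeff_reflect, Polynomial.revAt_le hj] at h3
  have h4 : ((-1:Polynomial ℂ)^n * ∏ i : Fin n,
      (1 - Polynomial.C (conj (l i)) * Polynomial.X)).coeff j =
      (-1:ℂ)^n * (∏ i : Fin n, (1 - Polynomial.C (conj (l i)) * Polynomial.X)).coeff j := by
    rw [show (-1:Polynomial ℂ)^n = Polynomial.C ((-1:ℂ)^n) from by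
      rw [map_pow, Polynomial.C_neg, Polynomial.C_1]]
    rw [Polynomial.coeff_C_mul]
  rw [h4] at h3
  have h5 : ((-1:ℂ)^n) * ((-1:ℂ)^n) = 1 := by
    rw [← pow_add]
    exact Even.neg_one_pow ⟨n, by ring⟩
  calc (∏ i : Fin n, (1 - Polynomial.C (conj (l i)) * Polynomial.X)).coeff j
      = ((-1:ℂ)^n * ((-1:ℂ)^n)) * (∏ i : Fin n,
        (1 - Polynomial.C (conj (l i)) * Polynomial.X)).coeff j := by rw [h5, one_mul]
    _ = (-1:ℂ)^n * ((-1:ℂ)^n * (∏ i : Fin n,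
        (1 - Polynomial.C (conj (l i)) * Polynomial.X)).coeff j) := by ring
    _ = (-1:ℂ)^n * conj ((∏ i : Fin n,
        (Polynomial.C (l i) - Polynomial.X)).coeff (n - j)) := by rw [← h3]

end Reversal

end BMS

namespace BMS
open Complex ComplexConjugate Filter Polynomial

lemma natDegree_lin2_le (c : ℂ) :
    ((1 : Polynomial ℂ) - Polynomial.C c * Polynomial.X).natDegree ≤ 1 := by
  refine le_trans (Polynomial.natDegree_sub_le _ _) ?_
  have h1 : (Polynomial.C c * Polynomial.X : Polynomial ℂ).natDegree ≤ 1 :=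
    le_trans (Polynomial.natDegree_C_mul_le c _) Polynomial.natDegree_X_le
  simp [Polynomial.natDegree_one]
  omega

lemma rec_of_KB {n : ℕ} (l : Fin n → ℂ) {r : ℝ} (hr1 : r < 1)
    (hl : ∀ i, ‖l i‖ ≤ r) (g : ℂ → ℂ) (hg : MemKB l g) :
    ∀ M, n ≤ M → PowerSeries.coeff M
      (QP (List.ofFn (fun i => conj (l i))) * PowerSeries.mk (coef g)) = 0 := by
  intro M hM
  classical
  set P : Polynomial ℂ := ∏ i : Fin n, (Polynomial.C (l i) - Polynomial.X) with hP
  set Q : Polynomial ℂ := ∏ i : Fin n, (1 - Polynomial.C (conj (l i)) * Polynomial.X) with hQ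
  set FP : Polynomial ℂ := P * Polynomial.X^(M-n) with hFP
  set HP : Polynomial ℂ := Q * Polynomial.X^(M-n) with hHP
  have hden : ∀ (z : ℂ), ‖z‖ < 1 → ∀ i : Fin n, (1 : ℂ) - conj (l i) * z ≠ 0 := by
    intro z hz i h
    have h1 : conj (l i) * z = 1 := by linear_combination -h
    have h2 : ‖conj (l i) * z‖ = 1 := by rw [h1, norm_one]
    rw [norm_mul, norm_conj'] at h2
    have h3 := hl i
    nlinarith [norm_nonneg (l i), norm_nonneg z]
  have hEq : (fun z => BlaschkeProd l z * HP.eval z) =ᶠ[nhds 0] (fun z => FP.eval z) := by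
    apply Filter.eventuallyEq_of_mem (Metric.ball_mem_nhds (0:ℂ) one_pos)
    intro z hz
    have hz1 : ‖z‖ < 1 := mem_ball_zero_iff.mp hz
    show BlaschkeProd l z * HP.eval z = FP.eval z
    rw [hHP, hFP, Polynomial.eval_mul, Polynomial.eval_mul, BlaschkeProd]
    have hQev : Q.eval z = ∏ i : Fin n, (1 - conj (l i) * z) := by
      rw [hQ, Polynomial.eval_prod]
      apply Finset.prod_congr rfl; intro i _; simp
    have hPev : P.eval z = ∏ i : Fin n, (l i - z) := by
      rw [hP, Polynomial.eval_prod]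
      apply Finset.prod_congr rfl; intro i _; simp
    rw [hQev, hPev, ← mul_assoc, ← Finset.prod_mul_distrib]
    congr 1
    apply Finset.prod_congr rfl
    intro i _
    rw [blaschke]
    exact div_mul_cancel₀ _ (hden z hz1 i)
  have hco : ∀ k, coef (fun z => BlaschkeProd l z * HP.eval z) k = FP.coeff k := by
    intro k
    have h1 : coef (fun z => BlaschkeProd l z * HP.eval z) k
        = coef (fun z => FP.eval z) k := by
      unfold coef
      rw [Filter.EventuallyEq.iteratedDeriv_eq k hEq]
    rw [h1, coef_polyeval]
  have hpair := hg.2 (fun z => HP.eval z) (memH2_polyeval HP)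
  rw [cauchyPairing] at hpair
  have hpair2 : ∑' k, coef g k * conj (FP.coeff k) = 0 := by
    rw [← hpair]
    apply tsum_congr; intro k; rw [hco]
  have hPdeg : P.natDegree ≤ n := by
    have := natDegree_prod_lin_le l (Finset.univ)
    simpa [hP] using this
  have hQdeg : Q.natDegree ≤ n := by
    rw [hQ]
    refine le_trans (Polynomial.natDegree_prod_le _ _) ?_
    have h2 : ∑ i : Fin n, ((1:Polynomial ℂ) - Polynomial.C (conj (l i)) * Polynomial.X).natDegree
        ≤ ∑ _i : Fin n, 1 := Finset.sum_le_sum (fun i _ => natDegree_lin2_le (conj (l i)))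
    simpa using h2
  have hFPdeg : FP.natDegree ≤ M := by
    rw [hFP]
    refine le_trans Polynomial.natDegree_mul_le ?_
    rw [Polynomial.natDegree_X_pow]
    omega
  have hsum1 : ∑' k, coef g k * conj (FP.coeff k)
      = ∑ k ∈ Finset.range (M+1), coef g k * conj (FP.coeff k) := by
    apply tsum_eq_sum
    intro k hk
    rw [Finset.mem_range, not_lt] at hk
    rw [Polynomial.coeff_eq_zero_of_natDegree_lt (by omega), map_zero, mul_zero]
  have hsr := Finset.sum_range_reflect (fun k => coef g k * conj (FP.coeff k)) (M+1)
  have hsum2 : ∑ k ∈ Finset.range (M+1), coef g k * conj (FP.coeff k)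
      = ∑ j ∈ Finset.range (M+1), coef g (M-j) * conj (FP.coeff (M-j)) := by
    rw [← hsr]
    apply Finset.sum_congr rfl
    intro j hj
    have h6 : M+1-1-j = M - j := by omega
    rw [h6]
  have hsum3 : ∑ j ∈ Finset.range (M+1), coef g (M-j) * conj (FP.coeff (M-j))
      = ∑ j ∈ Finset.range (n+1), coef g (M-j) * conj (FP.coeff (M-j)) := by
    symm
    apply Finset.sum_subset (Finset.range_subset_range.mpr (by omega))
    intro j hj1 hj2
    rw [Finset.mem_range, not_lt] at hj2
    rw [Finset.mem_range] at hj1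
    have hcoefz : FP.coeff (M-j) = 0 := by
      rw [hFP, Polynomial.coeff_mul_X_pow', if_neg (by omega)]
    rw [hcoefz, map_zero, mul_zero]
  have h5 : ((-1:ℂ)^n) * ((-1:ℂ)^n) = 1 := by
    rw [← pow_add]; exact Even.neg_one_pow ⟨n, by ring⟩
  have hsum4 : ∀ j ∈ Finset.range (n+1), coef g (M-j) * conj (FP.coeff (M-j))
      = (-1:ℂ)^n * (Q.coeff j * coef g (M-j)) := by
    intro j hj
    rw [Finset.mem_range] at hj
    have h1 : FP.coeff (M-j) = P.coeff (n-j) := by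
      rw [hFP, Polynomial.coeff_mul_X_pow', if_pos (by omega)]
      congr 1; omega
    have h2 := Q_coeff_eq l j (by omega)
    rw [← hP, ← hQ] at h2
    have h3 : conj (P.coeff (n-j)) = (-1:ℂ)^n * Q.coeff j := by
      calc conj (P.coeff (n-j)) = ((-1:ℂ)^n * (-1:ℂ)^n) * conj (P.coeff (n-j)) := by
            rw [h5, one_mul]
        _ = (-1:ℂ)^n * Q.coeff j := by rw [h2]; ring
    rw [h1, h3]; ring
  have hQP : QP (List.ofFn (fun i => conj (l i))) = (Q : PowerSeries ℂ) := by
    rw [QP, List.map_ofFn, List.prod_ofFn, hQ]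
    rw [← Polynomial.coeToPowerSeries.ringHom_apply, map_prod]
    apply Finset.prod_congr rfl
    intro i _
    rw [Function.comp]
    rw [map_sub, map_one, map_mul, Polynomial.coeToPowerSeries.ringHom_apply,
      Polynomial.coeToPowerSeries.ringHom_apply, Polynomial.coe_C, Polynomial.coe_X]
  have hfin : PowerSeries.coeff M (QP (List.ofFn (fun i => conj (l i)))
      * PowerSeries.mk (coef g)) = ∑ j ∈ Finset.range (n+1), Q.coeff j * coef g (M-j) := by
    rw [hQP, PowerSeries.coeff_mul, Finset.Nat.sum_antidiagonal_eq_sum_range_succ_mk]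
    have hterm : ∀ j ∈ Finset.range (M+1),
        PowerSeries.coeff j (Q : PowerSeries ℂ) *
          PowerSeries.coeff (M-j) (PowerSeries.mk (coef g))
        = Q.coeff j * coef g (M-j) := by
      intro j _
      rw [Polynomial.coeff_coe, PowerSeries.coeff_mk]
    rw [Finset.sum_congr rfl hterm]
    symm
    apply Finset.sum_subset (Finset.range_subset_range.mpr (by omega))
    intro j hj1 hj2
    rw [Finset.mem_range, not_lt] at hj2
    rw [Polynomial.coeff_eq_zero_of_natDegree_lt (by omega), zero_mul]
  have hzero : (-1:ℂ)^n * ∑ j ∈ Finset.range (n+1), Q.coeff j * coef g (M-j) = 0 := by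
    rw [Finset.mul_sum, ← Finset.sum_congr rfl hsum4, ← hsum3, ← hsum2, ← hsum1, hpair2]
  rw [hfin]
  have hne : ((-1:ℂ)^n) ≠ 0 := pow_ne_zero n (by norm_num)
  exact (mul_eq_zero.mp hzero).resolve_left hne

end BMS

namespace BMS
open Complex ComplexConjugate Filter

lemma GB_of_rec : ∀ (L : List ℂ), (∀ ν ∈ L, ‖ν‖ < 1) → ∀ (a : ℕ → ℂ) (N : ℕ),
    (∀ M, N ≤ M → PowerSeries.coeff M (QP L * PowerSeries.mk a) = 0) → GB a := by
  intro L
  induction L with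
  | nil =>
    intro _ a N hrec
    have hz : ∀ M, N ≤ M → a M = 0 := by
      intro M hm
      have h := hrec M hm
      rwa [QP_nil, one_mul, PowerSeries.coeff_mk] at h
    refine ⟨∑ j ∈ Finset.range N, ‖a j‖ * 2^j, 1/2, ?_, by norm_num, by norm_num, ?_⟩
    · apply Finset.sum_nonneg; intro j _; positivity
    · intro k
      by_cases hk : k < N
      · have h1 : ‖a k‖ * 2^k ≤ ∑ j ∈ Finset.range N, ‖a j‖ * 2^j :=
          Finset.single_le_sum (f := fun j => ‖a j‖ * (2:ℝ)^j)
            (fun j _ => by positivity) (Finset.mem_range.mpr hk)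
        have h2 : ((1:ℝ)/2)^k = ((2:ℝ)^k)⁻¹ := by
          rw [div_pow, one_pow, one_div]
        rw [h2]
        calc ‖a k‖ = (‖a k‖ * 2^k) * ((2:ℝ)^k)⁻¹ := by field_simp
          _ ≤ (∑ j ∈ Finset.range N, ‖a j‖ * 2^j) * ((2:ℝ)^k)⁻¹ :=
              mul_le_mul_of_nonneg_right h1 (by positivity)
      · rw [hz k (by omega)]
        simp
        positivity
  | cons μ L' ih =>
    intro hbnd a N hrec
    have hμ1 : ‖μ‖ < 1 := hbnd μ List.mem_cons_self
    set y : ℕ → ℂ := fun k => a k - μ * sh a k with hy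
    have hmky : (1 - PowerSeries.C μ * PowerSeries.X) * PowerSeries.mk a
        = PowerSeries.mk y := by
      apply PowerSeries.ext
      intro M
      rw [coeff_one_sub_CXmul, PowerSeries.coeff_mk, PowerSeries.coeff_mk]
      cases M with
      | zero => simp [hy, sh_zero]
      | succ M => simp [hy, sh_succ]
    have hrec' : ∀ M, N ≤ M → PowerSeries.coeff M (QP L' * PowerSeries.mk y) = 0 := by
      intro M hm
      have h := hrec M hm
      rw [QP_cons] at h
      rw [← hmky, show QP L' * ((1 - PowerSeries.C μ * PowerSeries.X) * PowerSeries.mk a)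
        = (1 - PowerSeries.C μ * PowerSeries.X) * QP L' * PowerSeries.mk a from by ring]
      exact h
    have hGy : GB y := ih (fun ν hν => hbnd ν (List.mem_cons_of_mem μ hν)) y N hrec'
    have ha : a = gconv μ y := by
      apply gconv_unique
      · rw [hy]; simp [sh_zero]
      · intro k
        rw [hy]
        simp only [sh_succ]
        ring
    rw [ha]
    exact GB_gconv hμ1 hGy

end BMS

/-- Bernstein-type inequality for model spaces (Lemme 1, first part):
if `B` is a finite Blaschke product of degree `n` with zeros `l i` of modulus
at most `r < 1`, then every `g ∈ K_B` satisfies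
`‖g′‖_{H²} ≤ (5/2) (n/(1-r)) ‖g‖_{H²}`. -/
theorem bernstein_model_space (n : ℕ) (hn : 1 ≤ n) (l : Fin n → ℂ)
    (r : ℝ) (hr0 : 0 ≤ r) (hr1 : r < 1) (hl : ∀ i, ‖l i‖ ≤ r)
    (g : ℂ → ℂ) (hg : MemKB l g) :
    H2norm (deriv g) ≤ (5 / 2) * ((n : ℝ) / (1 - r)) * H2norm g := by
  classical
  set a : ℕ → ℂ := coef g with hadef
  set Lmu : List ℂ := List.ofFn (fun i => conj (l i)) with hLmu
  have hlen : Lmu.length = n := by rw [hLmu, List.length_ofFn]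
  have hbnd : ∀ ν ∈ Lmu, ‖ν‖ ≤ r := by
    intro ν hν
    rw [hLmu, List.mem_ofFn] at hν
    obtain ⟨i, hi⟩ := hν
    rw [← hi, BMS.norm_conj']
    exact hl i
  have hrec : ∀ M, Lmu.length ≤ M →
      PowerSeries.coeff M (BMS.QP Lmu * PowerSeries.mk a) = 0 := by
    intro M hM
    rw [hlen] at hM
    exact BMS.rec_of_KB l hr1 hl g hg M hM
  have hGB : BMS.GB a :=
    BMS.GB_of_rec Lmu (fun ν hν => lt_of_le_of_lt (hbnd ν hν) hr1) a Lmu.length hrec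
  have hmain := BMS.main_induction r hr0 hr1 Lmu a hbnd hGB hrec
  rw [hlen] at hmain
  have hH2g : H2norm g = BMS.Nn a := rfl
  have hH2d : H2norm (deriv g) = BMS.Nn (BMS.Dop a) := by
    unfold H2norm BMS.Nn BMS.sqnorm
    congr 1
    apply tsum_congr
    intro k
    rw [BMS.coef_deriv, BMS.Dop]
  rw [hH2d, hH2g]
  exact hmain
end
end
end

section
/- For every integer n ≥ 1 and every r ∈ [0,1), the interpolation constant C_{n,r}(H², H^∞) := sup{ c(σ, H², H^∞) : #σ ≤ n, σ ⊂ {|z| ≤ r} } satisfies C_{n,r}(H², H^∞) ≤ (2n/(1−r))^{1/2}. -/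
open Complex Metric ComplexConjugate

noncomputable section

namespace CnrAux

open scoped ENNReal NNReal

lemma holOn_iff {f : ℂ → ℂ} : HolOn f ↔ DifferentiableOn ℂ f (Metric.ball 0 1) :=
  analyticOn_iff_differentiableOn isOpen_ball

lemma coef_eq_coeff {f : ℂ → ℂ} {p : FormalMultilinearSeries ℂ ℂ ℂ} {r : ℝ≥0∞}
    (h : HasFPowerSeriesOnBall f p 0 r) (k : ℕ) : coef f k = p.coeff k := by
  have h1 : iteratedDeriv k f 0 = (k.factorial : ℂ) * p.coeff k := by
    rw [iteratedDeriv_eq_iteratedFDeriv, ← h.factorial_smul 1 k,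
      FormalMultilinearSeries.apply_eq_pow_smul_coeff, one_pow, one_smul, nsmul_eq_mul]
  have h2 : (k.factorial : ℂ) ≠ 0 := Nat.cast_ne_zero.2 k.factorial_ne_zero
  rw [coef, h1]
  field_simp

lemma hasSum_coef {f : ℂ → ℂ} (hf : DifferentiableOn ℂ f (Metric.ball 0 1))
    {z : ℂ} (hz : ‖z‖ < 1) : HasSum (fun k => coef f k * z ^ k) (f z) := by
  obtain ⟨t, ht1, ht2⟩ := exists_between hz
  have ht0 : (0:ℝ) ≤ t := le_trans (norm_nonneg z) ht1.le
  set R : NNReal := ⟨t, ht0⟩ with hR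
  have hRpos : 0 < R := by
    have : (0:ℝ) < t := lt_of_le_of_lt (norm_nonneg z) ht1
    exact_mod_cast this
  have hsub : Metric.closedBall (0:ℂ) R ⊆ Metric.ball 0 1 :=
    Metric.closedBall_subset_ball (by exact_mod_cast ht2)
  have hs := (hf.mono hsub).hasFPowerSeriesOnBall hRpos
  have hz' : z ∈ Metric.eball (0:ℂ) R := by
    rw [mem_emetric_ball_zero_iff, enorm_eq_nnnorm]
    exact_mod_cast ht1
  have := hs.hasSum hz'
  rw [zero_add] at this
  refine this.congr_fun fun n => ?_
  rw [FormalMultilinearSeries.apply_eq_pow_smul_coeff, ← coef_eq_coeff hs, smul_eq_mul, mul_comm]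

lemma coef_of_rep {f : ℂ → ℂ} {c : ℕ → ℂ}
    (h : ∀ z : ℂ, ‖z‖ < 1 → HasSum (fun k => c k * z ^ k) (f z)) (k : ℕ) :
    coef f k = c k := by
  classical
  set p := FormalMultilinearSeries.ofScalars ℂ c with hp
  have hap : ∀ (y : ℂ) (n : ℕ), p n (fun _ => y) = c n * y ^ n := by
    intro y n
    rw [hp, FormalMultilinearSeries.ofScalars_apply_eq, smul_eq_mul]
  have hrad : 1 ≤ p.radius := by
    refine ENNReal.le_of_forall_nnreal_lt fun R hR => ?_
    have hR1 : (R:ℝ) < 1 := by exact_mod_cast hR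
    have hR0 : (0:ℝ) ≤ R := R.2
    obtain ⟨t, ht1, ht2⟩ := exists_between hR1
    have ht0 : (0:ℝ) < t := lt_of_le_of_lt hR0 ht1
    have hsum := (h (t:ℂ) (by simpa [Complex.norm_real, Real.norm_eq_abs, _root_.abs_of_nonneg ht0.le] using ht2)).summable
    have htend : Filter.Tendsto (fun n => ‖c n * (t:ℂ) ^ n‖) Filter.atTop (nhds 0) := by
      simpa using hsum.tendsto_atTop_zero.norm
    obtain ⟨C, hC⟩ := htend.bddAbove_range
    refine p.le_radius_of_bound C fun n => ?_
    have h1 : ‖p n‖ ≤ ‖c n‖ := by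
      rw [hp, FormalMultilinearSeries.ofScalars_norm]
    have h2 : ‖c n * (t:ℂ) ^ n‖ ≤ C := hC ⟨n, rfl⟩
    have h3 : ‖c n‖ * (R:ℝ) ^ n ≤ ‖c n‖ * t ^ n := by
      apply mul_le_mul_of_nonneg_left (pow_le_pow_left₀ hR0 ht1.le n) (norm_nonneg _)
    have h4 : ‖c n * (t:ℂ) ^ n‖ = ‖c n‖ * t ^ n := by
      rw [norm_mul, norm_pow, Complex.norm_real, Real.norm_of_nonneg ht0.le]
    calc ‖p n‖ * (R:ℝ) ^ n ≤ ‖c n‖ * (R:ℝ) ^ n :=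
          mul_le_mul_of_nonneg_right h1 (pow_nonneg hR0 n)
      _ ≤ ‖c n‖ * t ^ n := h3
      _ ≤ C := h4 ▸ h2
  have hball : HasFPowerSeriesOnBall f p 0 1 := by
    refine ⟨hrad, one_pos, fun {y} hy => ?_⟩
    rw [mem_emetric_ball_zero_iff, enorm_eq_nnnorm] at hy
    have hy' : ‖y‖ < 1 := by exact_mod_cast hy
    rw [zero_add]
    exact (h y hy').congr_fun fun n => hap y n
  rw [coef_eq_coeff hball k, FormalMultilinearSeries.coeff]
  simpa using hap 1 k

end CnrAux
namespace CnrAux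

open Metric Complex ComplexConjugate

lemma normSq_lt_one {l : ℂ} (hl : ‖l‖ < 1) : Complex.normSq l < 1 := by
  rw [← Complex.sq_norm]
  nlinarith [norm_nonneg l]

lemma denom_ne {l z : ℂ} (hl : ‖l‖ < 1) (hz : ‖z‖ < 1) : (1 : ℂ) - conj l * z ≠ 0 := by
  intro h
  have h1 : (1:ℂ) = conj l * z := by linear_combination h
  have h2 : ‖conj l * z‖ < 1 := by
    rw [norm_mul, RCLike.norm_conj]
    nlinarith [norm_nonneg l, norm_nonneg z]
  rw [← h1] at h2
  simp at h2

lemma norm_blaschke_le {l z : ℂ} (hl : ‖l‖ < 1) (hz : ‖z‖ < 1) : ‖blaschke l z‖ ≤ 1 := by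
  rw [blaschke, norm_div]
  refine div_le_one_of_le₀ ?_ (norm_nonneg _)
  have h1 : Complex.normSq (l - z) ≤ Complex.normSq (1 - conj l * z) := by
    have e : Complex.normSq (1 - conj l * z) - Complex.normSq (l - z)
        = (1 - Complex.normSq l) * (1 - Complex.normSq z) := by
      simp only [Complex.normSq_apply, Complex.sub_re, Complex.sub_im, Complex.mul_re,
        Complex.mul_im, Complex.one_re, Complex.one_im, Complex.conj_re, Complex.conj_im]
      ring
    nlinarith [normSq_lt_one hl, normSq_lt_one hz]
  calc ‖l - z‖ = Real.sqrt (Complex.normSq (l - z)) := by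
        rw [Complex.norm_def]
    _ ≤ Real.sqrt (Complex.normSq (1 - conj l * z)) := Real.sqrt_le_sqrt h1
    _ = ‖1 - conj l * z‖ := by rw [Complex.norm_def]

lemma kern_bound {l z : ℂ} {r : ℝ} (hlr : ‖l‖ ≤ r) (hr1 : r < 1) (hz : ‖z‖ < 1) :
    (1 - ‖l‖ ^ 2) * ‖((1 : ℂ) - conj l * z)⁻¹‖ ^ 2 ≤ 2 / (1 - r) := by
  have hl1 : ‖l‖ < 1 := lt_of_le_of_lt hlr hr1
  have ht0 : (0:ℝ) ≤ ‖l‖ := norm_nonneg l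
  have hd : 1 - ‖l‖ ≤ ‖(1 : ℂ) - conj l * z‖ := by
    have h1 : ‖conj l * z‖ ≤ ‖l‖ := by
      rw [norm_mul, RCLike.norm_conj]
      nlinarith [norm_nonneg l, norm_nonneg z]
    have h2 := norm_sub_norm_le (1 : ℂ) (conj l * z)
    simp only [norm_one] at h2
    linarith
  have hDpos : (0:ℝ) < 1 - ‖l‖ := by linarith
  have hinv : ‖((1 : ℂ) - conj l * z)⁻¹‖ ≤ (1 - ‖l‖)⁻¹ := by
    rw [norm_inv]
    exact inv_anti₀ hDpos hd
  have hinv0 : (0:ℝ) ≤ ‖((1 : ℂ) - conj l * z)⁻¹‖ := norm_nonneg _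
  have hsq : ‖((1 : ℂ) - conj l * z)⁻¹‖ ^ 2 ≤ ((1 - ‖l‖)⁻¹) ^ 2 := by
    nlinarith
  have hl2 : (0:ℝ) ≤ 1 - ‖l‖ ^ 2 := by nlinarith
  have step1 : (1 - ‖l‖ ^ 2) * ‖((1 : ℂ) - conj l * z)⁻¹‖ ^ 2
      ≤ (1 - ‖l‖ ^ 2) * ((1 - ‖l‖)⁻¹) ^ 2 := by
    exact mul_le_mul_of_nonneg_left hsq hl2
  refine le_trans step1 ?_
  have hpos2 : (0:ℝ) < (1 - ‖l‖) ^ 2 := by positivity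
  have hr0 : (0:ℝ) < 1 - r := by linarith
  rw [inv_pow, ← div_eq_mul_inv, div_le_div_iff₀ hpos2 hr0]
  nlinarith [sq_nonneg (1 - r), sq_nonneg (‖l‖ - r), mul_nonneg (mul_nonneg ht0 ht0) (le_of_lt hr0),
    mul_nonneg (sub_nonneg.2 hlr) (le_of_lt hr0), mul_nonneg (sub_nonneg.2 hlr) ht0]

lemma diff_kern {l : ℂ} (hl : ‖l‖ < 1) :
    DifferentiableOn ℂ (fun z => ((1 : ℂ) - conj l * z)⁻¹) (ball 0 1) := by
  apply DifferentiableOn.inv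
  · exact (differentiableOn_const _).sub ((differentiableOn_const _).mul differentiableOn_id)
  · exact fun z hz => denom_ne hl (mem_ball_zero_iff.1 hz)

lemma diff_blaschke {l : ℂ} (hl : ‖l‖ < 1) :
    DifferentiableOn ℂ (blaschke l) (ball 0 1) := by
  apply DifferentiableOn.div
  · exact (differentiableOn_const _).sub differentiableOn_id
  · exact (differentiableOn_const _).sub ((differentiableOn_const _).mul differentiableOn_id)
  · exact fun z hz => denom_ne hl (mem_ball_zero_iff.1 hz)

end CnrAux
namespace CnrAux

open Metric Complex ComplexConjugate Filter

/-- One step of the Takenaka–Malmquist peeling. -/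
def stepf (l : ℂ) (F : ℂ → ℂ) : ℂ → ℂ :=
  fun z => (1 - conj l * z) * dslope F l z - conj l * F l

/-- The extended coefficient sequence of `dslope F l`. -/
def thetaT (l : ℂ) (F : ℂ → ℂ) : ℕ → ℂ :=
  fun k => match k with
  | 0 => F l
  | (j+1) => coef (dslope F l) j

variable {l : ℂ} {F : ℂ → ℂ}

lemma diff_dslope (hl : ‖l‖ < 1) (hF : DifferentiableOn ℂ F (ball 0 1)) :
    DifferentiableOn ℂ (dslope F l) (ball 0 1) :=
  (Complex.differentiableOn_dslope (isOpen_ball.mem_nhds (mem_ball_zero_iff.2 hl))).2 hF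

lemma stepf_diff (hl : ‖l‖ < 1) (hF : DifferentiableOn ℂ F (ball 0 1)) :
    DifferentiableOn ℂ (stepf l F) (ball 0 1) := by
  refine DifferentiableOn.sub ?_ (differentiableOn_const _)
  exact ((differentiableOn_const _).sub
    ((differentiableOn_const _).mul differentiableOn_id)).mul (diff_dslope hl hF)

lemma dslope_key (z : ℂ) : F z = F l + (z - l) * dslope F l z := by
  have h := sub_smul_dslope F l z
  rw [smul_eq_mul] at h
  linear_combination -h

lemma stepf_decomp (hl : ‖l‖ < 1) {z : ℂ} (hz : ‖z‖ < 1) :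
    F z = (1 - conj l * l) * F l * (1 - conj l * z)⁻¹ - blaschke l z * stepf l F z := by
  have hne := denom_ne hl hz
  rw [blaschke, stepf]
  rw [dslope_key (l := l) (F := F) z]
  have e : (1 - conj l * z) * (1 - conj l * z)⁻¹ = 1 := mul_inv_cancel₀ hne
  rw [div_eq_mul_inv]
  linear_combination (-(F l + (z - l) * dslope F l z)) * e

/-- Series representation of `F` in terms of `thetaT`. -/
lemma rep_combined (hl : ‖l‖ < 1) (hF : DifferentiableOn ℂ F (ball 0 1))
    {z : ℂ} (hz : ‖z‖ < 1) :
    HasSum (fun k => thetaT l F k * z ^ k) (F l + z * dslope F l z) := by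
  classical
  have hD := diff_dslope hl hF
  have repΘ := hasSum_coef hD hz
  have S1 : HasSum (fun j => coef (dslope F l) j * z ^ (j+1)) (z * dslope F l z) := by
    refine (repΘ.mul_left z).congr_fun fun j => ?_
    ring
  have S2 : HasSum (fun k => (match k with | 0 => (0:ℂ) | (j+1) => coef (dslope F l) j) * z ^ k)
      (z * dslope F l z) := by
    refine (Function.Injective.hasSum_iff Nat.succ_injective ?_).1 ?_
    · intro x hx
      have hx0 : x = 0 := by
        rcases x with _ | j
        · rfl
        · exact absurd ⟨j, rfl⟩ hx
      subst hx0
      simp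
    · exact S1.congr_fun fun j => rfl
  have S3 : HasSum (fun k : ℕ => (if k = 0 then F l else 0) * z ^ k) (F l) := by
    have := hasSum_ite_eq (0:ℕ) (F l)
    refine this.congr_fun fun k => ?_
    by_cases h : k = 0 <;> simp [h]
  have := S3.add S2
  refine this.congr_fun fun k => ?_
  rcases k with _ | j <;> simp [thetaT] <;> ring

lemma rep_F (hl : ‖l‖ < 1) (hF : DifferentiableOn ℂ F (ball 0 1)) {z : ℂ} (hz : ‖z‖ < 1) :
    HasSum (fun k => (thetaT l F k - l * coef (dslope F l) k) * z ^ k) (F z) := by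
  have h1 := rep_combined hl hF hz
  have h2 := (hasSum_coef (diff_dslope hl hF) hz).mul_left l
  have h3 := h1.sub h2
  have hv : F l + z * dslope F l z - l * dslope F l z = F z := by
    rw [dslope_key (l := l) (F := F) z]; ring
  rw [hv] at h3
  refine h3.congr_fun fun k => ?_
  ring

lemma rep_step (hl : ‖l‖ < 1) (hF : DifferentiableOn ℂ F (ball 0 1)) {z : ℂ} (hz : ‖z‖ < 1) :
    HasSum (fun k => (coef (dslope F l) k - conj l * thetaT l F k) * z ^ k) (stepf l F z) := by
  have h1 := (rep_combined hl hF hz).mul_left (conj l)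
  have h2 := (hasSum_coef (diff_dslope hl hF) hz).sub h1
  have hv : dslope F l z - conj l * (F l + z * dslope F l z) = stepf l F z := by
    rw [stepf]; ring
  rw [hv] at h2
  refine h2.congr_fun fun k => ?_
  ring

lemma coef_F_eq (hl : ‖l‖ < 1) (hF : DifferentiableOn ℂ F (ball 0 1)) (k : ℕ) :
    coef F k = thetaT l F k - l * coef (dslope F l) k :=
  coef_of_rep (fun z hz => rep_F hl hF hz) k

lemma coef_step_eq (hl : ‖l‖ < 1) (hF : DifferentiableOn ℂ F (ball 0 1)) (k : ℕ) :
    coef (stepf l F) k = coef (dslope F l) k - conj l * thetaT l F k :=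
  coef_of_rep (fun z hz => rep_step hl hF hz) k

end CnrAux
namespace CnrAux

open Metric Complex ComplexConjugate Filter

variable {l : ℂ} {F : ℂ → ℂ}

lemma norm_sq_eq_normSq (w : ℂ) : ‖w‖ ^ 2 = Complex.normSq w := by
  rw [Complex.sq_norm]

lemma alg_key (x y c : ℂ) :
    ‖x - c * y‖ ^ 2 = ‖y - conj c * x‖ ^ 2 + (1 - ‖c‖ ^ 2) * (‖x‖ ^ 2 - ‖y‖ ^ 2) := by
  rw [norm_sq_eq_normSq, norm_sq_eq_normSq, norm_sq_eq_normSq, norm_sq_eq_normSq,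
    norm_sq_eq_normSq]
  simp only [Complex.normSq_apply, Complex.sub_re, Complex.sub_im, Complex.mul_re,
    Complex.mul_im, Complex.conj_re, Complex.conj_im]
  ring

lemma cs_weighted {w b : ℕ → ℝ} (hw : ∀ d, 0 ≤ w d) (hb : ∀ d, 0 ≤ b d)
    (hsw : Summable w) (hsb : Summable fun d => w d * b d ^ 2) :
    (∑' d, w d * b d) ^ 2 ≤ (∑' d, w d) * (∑' d, w d * b d ^ 2) := by
  have hsm : Summable fun d => w d * b d := by
    refine Summable.of_nonneg_of_le (fun d => mul_nonneg (hw d) (hb d)) (fun d => ?_)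
      ((hsw.add hsb).mul_left (1/2 : ℝ))
    have h1 : 2 * b d ≤ 1 + b d ^ 2 := by nlinarith [sq_nonneg (1 - b d)]
    nlinarith [hw d, hb d]
  set A := ∑' d, w d with hA
  set B := ∑' d, w d * b d ^ 2 with hB
  have hA0 : 0 ≤ A := tsum_nonneg hw
  have hB0 : 0 ≤ B := tsum_nonneg fun d => mul_nonneg (hw d) (sq_nonneg _)
  have key : ∀ s : Finset ℕ, (∑ d ∈ s, w d * b d) ≤ Real.sqrt (A * B) := by
    intro s
    have h1 : (∑ d ∈ s, w d * b d) ^ 2 ≤ (∑ d ∈ s, w d) * (∑ d ∈ s, w d * b d ^ 2) := by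
      have h2 := Finset.sum_mul_sq_le_sq_mul_sq s (fun d => Real.sqrt (w d))
        (fun d => Real.sqrt (w d) * b d)
      have e1 : ∀ d ∈ s, Real.sqrt (w d) * (Real.sqrt (w d) * b d) = w d * b d := by
        intro d _
        rw [← mul_assoc, Real.mul_self_sqrt (hw d)]
      have e2 : ∀ d ∈ s, Real.sqrt (w d) ^ 2 = w d := fun d _ => Real.sq_sqrt (hw d)
      have e3 : ∀ d ∈ s, (Real.sqrt (w d) * b d) ^ 2 = w d * b d ^ 2 := by
        intro d _
        rw [mul_pow, Real.sq_sqrt (hw d)]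
      rwa [Finset.sum_congr rfl e1, Finset.sum_congr rfl e2, Finset.sum_congr rfl e3] at h2
    have h3 : (∑ d ∈ s, w d) ≤ A := Summable.sum_le_tsum s (fun i _ => hw i) hsw
    have h4 : (∑ d ∈ s, w d * b d ^ 2) ≤ B :=
      Summable.sum_le_tsum s (fun i _ => mul_nonneg (hw i) (sq_nonneg _)) hsb
    have h5 : (∑ d ∈ s, w d * b d) ^ 2 ≤ A * B := by
      refine le_trans h1 (mul_le_mul h3 h4 ?_ hA0)
      exact Finset.sum_nonneg fun i _ => mul_nonneg (hw i) (sq_nonneg _)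
    have h6 : 0 ≤ ∑ d ∈ s, w d * b d :=
      Finset.sum_nonneg fun i _ => mul_nonneg (hw i) (hb i)
    exact (Real.le_sqrt h6 (mul_nonneg hA0 hB0)).2 h5
  have h7 : (∑' d, w d * b d) ≤ Real.sqrt (A * B) := Summable.tsum_le_of_sum_le hsm key
  have h8 : 0 ≤ ∑' d, w d * b d := tsum_nonneg fun d => mul_nonneg (hw d) (hb d)
  calc (∑' d, w d * b d) ^ 2 ≤ Real.sqrt (A * B) ^ 2 := by nlinarith [Real.sqrt_nonneg (A*B)]
    _ = A * B := Real.sq_sqrt (mul_nonneg hA0 hB0)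

lemma coef_norm_bdd (hs : Summable fun k => ‖coef F k‖ ^ 2) :
    ∃ C : ℝ, ∀ k, ‖coef F k‖ ≤ C := by
  have h1 := hs.tendsto_atTop_zero
  have h2 : Tendsto (fun k => ‖coef F k‖) atTop (nhds 0) := by
    have h3 : Tendsto (fun k => Real.sqrt (‖coef F k‖ ^ 2)) atTop (nhds (Real.sqrt 0)) :=
      (Real.continuous_sqrt.continuousAt).tendsto.comp h1
    simpa [Real.sqrt_sq (norm_nonneg _)] using h3
  obtain ⟨C, hC⟩ := h2.bddAbove_range
  exact ⟨C, fun k => hC ⟨k, rfl⟩⟩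

lemma theta_tail (hl : ‖l‖ < 1) (hF : DifferentiableOn ℂ F (ball 0 1))
    (hs : Summable fun k => ‖coef F k‖ ^ 2) (j : ℕ) :
    HasSum (fun d => coef F (j + 1 + d) * l ^ d) (coef (dslope F l) j) := by
  set Θ := coef (dslope F l) with hΘ
  have hrec : ∀ i, Θ i = coef F (i + 1) + l * Θ (i + 1) := by
    intro i
    have h := coef_F_eq hl hF (i + 1)
    have e : thetaT l F (i + 1) = Θ i := rfl
    rw [e] at h
    linear_combination -h
  have hpartial : ∀ D, Θ j = (∑ d ∈ Finset.range D, coef F (j + 1 + d) * l ^ d)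
      + l ^ D * Θ (j + D) := by
    intro D
    induction D with
    | zero => simp
    | succ D ih =>
      rw [Finset.sum_range_succ]
      have h2 := hrec (j + D)
      have e1 : j + 1 + D = j + D + 1 := by omega
      have e2 : j + (D + 1) = j + D + 1 := by omega
      rw [e1, e2, pow_succ]
      rw [ih, h2]
      ring
  -- decay
  set t : ℝ := (1 + ‖l‖) / 2 with hts
  have ht0 : 0 < t := by positivity
  have htl : ‖l‖ < t := by rw [hts]; linarith
  have ht1 : t < 1 := by rw [hts]; linarith
  have htnorm : ‖(t : ℂ)‖ < 1 := by
    rw [Complex.norm_real, Real.norm_of_nonneg ht0.le]; exact ht1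
  have hrepΘt := hasSum_coef (diff_dslope hl hF) htnorm
  obtain ⟨C, hC⟩ : ∃ C : ℝ, ∀ k, ‖Θ k‖ * t ^ k ≤ C := by
    have h1 := hrepΘt.summable.tendsto_atTop_zero
    have h2 : Tendsto (fun k => ‖Θ k * (t:ℂ) ^ k‖) atTop (nhds 0) := by
      simpa using h1.norm
    have h3 : Tendsto (fun k => ‖Θ k‖ * t ^ k) atTop (nhds 0) := by
      refine h2.congr fun k => ?_
      rw [norm_mul, norm_pow, Complex.norm_real, Real.norm_of_nonneg ht0.le]
    obtain ⟨C, hC⟩ := h3.bddAbove_range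
    exact ⟨C, fun k => hC ⟨k, rfl⟩⟩
  have htend0 : Tendsto (fun D => l ^ D * Θ (j + D)) atTop (nhds 0) := by
    have hg : Tendsto (fun D => (C / t ^ j) * (‖l‖ / t) ^ D) atTop (nhds 0) := by
      have h4 : 0 ≤ ‖l‖ / t := by positivity
      have h5 : ‖l‖ / t < 1 := by rw [div_lt_one ht0]; exact htl
      simpa using (tendsto_pow_atTop_nhds_zero_of_lt_one h4 h5).const_mul (C / t ^ j)
    refine squeeze_zero_norm (fun D => ?_) hg
    · have h1 : ‖Θ (j + D)‖ ≤ C / t ^ (j + D) := by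
        rw [le_div_iff₀ (by positivity)]
        exact hC (j + D)
      have h2 : ‖l ^ D * Θ (j + D)‖ = ‖l‖ ^ D * ‖Θ (j + D)‖ := by
        rw [norm_mul, norm_pow]
      rw [h2]
      have h3 : ‖l‖ ^ D * ‖Θ (j + D)‖ ≤ ‖l‖ ^ D * (C / t ^ (j + D)) :=
        mul_le_mul_of_nonneg_left h1 (pow_nonneg (norm_nonneg l) D)
      refine le_trans h3 (le_of_eq ?_)
      rw [pow_add, div_pow]
      ring
  obtain ⟨Ca, hCa⟩ := coef_norm_bdd hs
  have hCa0 : 0 ≤ Ca := le_trans (norm_nonneg _) (hCa 0)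
  have hsummable : Summable fun d => coef F (j + 1 + d) * l ^ d := by
    refine Summable.of_norm ?_
    refine Summable.of_nonneg_of_le (fun d => norm_nonneg _) (fun d => ?_)
      ((summable_geometric_of_lt_one (norm_nonneg l) hl).mul_left Ca)
    rw [norm_mul, norm_pow]
    exact mul_le_mul_of_nonneg_right (hCa _) (pow_nonneg (norm_nonneg l) d)
  rw [hsummable.hasSum_iff_tendsto_nat]
  have hps : ∀ D, (∑ d ∈ Finset.range D, coef F (j + 1 + d) * l ^ d)
      = Θ j - l ^ D * Θ (j + D) := fun D => by linear_combination -(hpartial D)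
  have hT : Tendsto (fun D => Θ j - l ^ D * Θ (j + D)) atTop (nhds (Θ j - 0)) :=
    tendsto_const_nhds.sub htend0
  rw [sub_zero] at hT
  exact hT.congr fun D => (hps D).symm

lemma theta_norm_le (hl : ‖l‖ < 1) (hF : DifferentiableOn ℂ F (ball 0 1))
    (hs : Summable fun k => ‖coef F k‖ ^ 2) (j : ℕ) :
    ‖coef (dslope F l) j‖ ≤ ∑' d, ‖l‖ ^ d * ‖coef F (j + 1 + d)‖ := by
  have h1 := theta_tail hl hF hs j
  rw [← h1.tsum_eq]
  refine le_trans (norm_tsum_le_tsum_norm h1.summable.norm) (le_of_eq ?_)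
  refine tsum_congr fun d => ?_
  rw [norm_mul, norm_pow]
  ring

end CnrAux
namespace CnrAux

open Metric Complex ComplexConjugate Filter

variable {l : ℂ} {F : ℂ → ℂ}

lemma tail_tsum_le (hs : Summable fun k => ‖coef F k‖ ^ 2) (k : ℕ) :
    (∑' j, ‖coef F (j + k)‖ ^ 2) ≤ ∑' k, ‖coef F k‖ ^ 2 := by
  have h := Summable.sum_add_tsum_nat_add k hs
  have h2 : 0 ≤ ∑ i ∈ Finset.range k, ‖coef F i‖ ^ 2 :=
    Finset.sum_nonneg fun i _ => sq_nonneg _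
  linarith

set_option maxHeartbeats 1000000 in
lemma theta_sq_summable (hl : ‖l‖ < 1) (hF : DifferentiableOn ℂ F (ball 0 1))
    (hs : Summable fun k => ‖coef F k‖ ^ 2) :
    Summable fun j => ‖coef (dslope F l) j‖ ^ 2 := by
  set A := ∑' k, ‖coef F k‖ ^ 2 with hA
  -- summable in the (d, j) order
  have hfib : ∀ d : ℕ, Summable fun j => ‖l‖ ^ d * ‖coef F (j + 1 + d)‖ ^ 2 := by
    intro d
    have h1 : Summable fun j => ‖coef F (j + (d + 1))‖ ^ 2 :=
      (summable_nat_add_iff (f := fun k => ‖coef F k‖ ^ 2) (d+1)).2 hs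
    refine ((h1.mul_left (‖l‖ ^ d)).congr fun j => ?_)
    have e : j + (d + 1) = j + 1 + d := by omega
    rw [e]
  have hsumd : Summable fun d : ℕ => ∑' j, ‖l‖ ^ d * ‖coef F (j + 1 + d)‖ ^ 2 := by
    refine Summable.of_nonneg_of_le (fun d => tsum_nonneg fun j => by positivity) (fun d => ?_)
      ((summable_geometric_of_lt_one (norm_nonneg l) hl).mul_right A)
    rw [tsum_mul_left]
    refine mul_le_mul_of_nonneg_left ?_ (pow_nonneg (norm_nonneg l) d)
    have h2 : (∑' j, ‖coef F (j + 1 + d)‖ ^ 2) = ∑' j, ‖coef F (j + (d + 1))‖ ^ 2 := by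
      refine tsum_congr fun j => ?_
      have e : j + 1 + d = j + (d + 1) := by omega
      rw [e]
    rw [h2]
    exact tail_tsum_le hs (d + 1)
  have hprod : Summable fun p : ℕ × ℕ => ‖l‖ ^ p.1 * ‖coef F (p.2 + 1 + p.1)‖ ^ 2 := by
    refine (summable_prod_of_nonneg fun p => by positivity).2 ⟨fun d => hfib d, ?_⟩
    exact hsumd
  have hswap : Summable fun p : ℕ × ℕ => ‖l‖ ^ p.2 * ‖coef F (p.1 + 1 + p.2)‖ ^ 2 := by
    have := (Equiv.prodComm ℕ ℕ).summable_iff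
      (f := fun p : ℕ × ℕ => ‖l‖ ^ p.2 * ‖coef F (p.1 + 1 + p.2)‖ ^ 2)
    refine this.1 (hprod.congr fun p => rfl)
  obtain ⟨hfib2, hV⟩ := (summable_prod_of_nonneg (fun p => by positivity)).1 hswap
  -- pointwise bound via Cauchy-Schwarz
  have hgeo : Summable fun d : ℕ => ‖l‖ ^ d := summable_geometric_of_lt_one (norm_nonneg l) hl
  refine Summable.of_nonneg_of_le (fun j => sq_nonneg _) (fun j => ?_)
    (hV.mul_left (∑' d, ‖l‖ ^ d))
  have h1 := theta_norm_le hl hF hs j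
  have h2 := cs_weighted (w := fun d => ‖l‖ ^ d) (b := fun d => ‖coef F (j + 1 + d)‖)
    (fun d => pow_nonneg (norm_nonneg l) d) (fun d => norm_nonneg _) hgeo (hfib2 j)
  have h3 : ‖coef (dslope F l) j‖ ^ 2 ≤ (∑' d, ‖l‖ ^ d * ‖coef F (j + 1 + d)‖) ^ 2 := by
    have h0 : 0 ≤ ∑' d, ‖l‖ ^ d * ‖coef F (j + 1 + d)‖ :=
      tsum_nonneg fun d => by positivity
    nlinarith [norm_nonneg (coef (dslope F l) j)]
  exact le_trans h3 h2

lemma step_package (hl : ‖l‖ < 1) (hF : DifferentiableOn ℂ F (ball 0 1))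
    (hs : Summable fun k => ‖coef F k‖ ^ 2) :
    Summable (fun k => ‖coef (stepf l F) k‖ ^ 2) ∧
    (∑' k, ‖coef F k‖ ^ 2)
      = (1 - ‖l‖ ^ 2) * ‖F l‖ ^ 2 + ∑' k, ‖coef (stepf l F) k‖ ^ 2 := by
  set Θ := coef (dslope F l) with hΘdef
  set θt := thetaT l F with hθtdef
  have hΘsq : Summable fun j => ‖Θ j‖ ^ 2 := theta_sq_summable hl hF hs
  have hθtsq : Summable fun k => ‖θt k‖ ^ 2 := by
    refine (summable_nat_add_iff 1).1 ?_
    exact hΘsq.congr fun n => rfl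
  have htsum_θt : (∑' k, ‖θt k‖ ^ 2) = ‖F l‖ ^ 2 + ∑' k, ‖Θ k‖ ^ 2 := by
    rw [Summable.tsum_eq_zero_add hθtsq]
    rfl
  have hptwise : ∀ k, ‖coef F k‖ ^ 2
      = ‖coef (stepf l F) k‖ ^ 2 + (1 - ‖l‖ ^ 2) * (‖θt k‖ ^ 2 - ‖Θ k‖ ^ 2) := by
    intro k
    rw [coef_F_eq hl hF k, coef_step_eq hl hF k]
    exact alg_key (θt k) (Θ k) l
  have hdiff : Summable fun k => (1 - ‖l‖ ^ 2) * (‖θt k‖ ^ 2 - ‖Θ k‖ ^ 2) :=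
    (hθtsq.sub hΘsq).mul_left _
  have hSumStep : Summable fun k => ‖coef (stepf l F) k‖ ^ 2 := by
    refine (hs.sub hdiff).congr fun k => ?_
    rw [hptwise k]
    ring
  refine ⟨hSumStep, ?_⟩
  calc (∑' k, ‖coef F k‖ ^ 2)
      = ∑' k, (‖coef (stepf l F) k‖ ^ 2 + (1 - ‖l‖ ^ 2) * (‖θt k‖ ^ 2 - ‖Θ k‖ ^ 2)) :=
        tsum_congr hptwise
    _ = (∑' k, ‖coef (stepf l F) k‖ ^ 2) + (1 - ‖l‖ ^ 2) * ∑' k, (‖θt k‖ ^ 2 - ‖Θ k‖ ^ 2) := by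
        rw [Summable.tsum_add hSumStep hdiff, tsum_mul_left]
    _ = (∑' k, ‖coef (stepf l F) k‖ ^ 2) + (1 - ‖l‖ ^ 2) * ‖F l‖ ^ 2 := by
        rw [Summable.tsum_sub hθtsq hΘsq, htsum_θt]
        ring
    _ = (1 - ‖l‖ ^ 2) * ‖F l‖ ^ 2 + ∑' k, ‖coef (stepf l F) k‖ ^ 2 := by ring

end CnrAux
namespace CnrAux

open Metric Complex ComplexConjugate Filter

lemma sum_sq_le {T1 T2 a b c d : ℝ} (hT1 : 0 ≤ T1) (hT2 : 0 ≤ T2) (ha : 0 ≤ a)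
    (hb : 0 ≤ b) (hc : 0 ≤ c) (hd : 0 ≤ d) (h1 : T1 ^ 2 ≤ a * c) (h2 : T2 ^ 2 ≤ b * d) :
    (T1 + T2) ^ 2 ≤ (a + b) * (c + d) := by
  have k1 : (T1 * T2) ^ 2 ≤ (a * d) * (b * c) := by
    nlinarith [mul_le_mul h1 h2 (sq_nonneg T2) (mul_nonneg ha hc)]
  have hx : 0 ≤ T1 * T2 := mul_nonneg hT1 hT2
  have hu : 0 ≤ a * d := mul_nonneg ha hd
  have hv : 0 ≤ b * c := mul_nonneg hb hc
  have k2 : 2 * (T1 * T2) ≤ a * d + b * c := by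
    have h3 : T1 * T2 ≤ Real.sqrt ((a * d) * (b * c)) :=
      (Real.le_sqrt hx (mul_nonneg hu hv)).2 k1
    have h4 : Real.sqrt ((a * d) * (b * c)) ≤ (a * d + b * c) / 2 := by
      nlinarith [Real.sq_sqrt (mul_nonneg hu hv), Real.sqrt_nonneg ((a * d) * (b * c)),
        sq_nonneg (a * d - b * c)]
    linarith
  nlinarith [k2, h1, h2]

lemma conj_self_norm (w : ℂ) : (1 : ℂ) - conj w * w = ((1 - ‖w‖ ^ 2 : ℝ) : ℂ) := by
  have h : conj w * w = ((‖w‖ ^ 2 : ℝ) : ℂ) := by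
    rw [mul_comm, Complex.mul_conj, norm_sq_eq_normSq]
  rw [h]
  push_cast
  ring

lemma peel (m : ℕ) {r : ℝ} (hr0 : 0 ≤ r) (hr1 : r < 1) :
    ∀ (l : Fin m → ℂ), (∀ i, ‖l i‖ ≤ r) → ∀ f : ℂ → ℂ, DifferentiableOn ℂ f (ball 0 1) →
    Summable (fun k => ‖coef f k‖ ^ 2) →
    ∃ g h : ℂ → ℂ, DifferentiableOn ℂ g (ball 0 1) ∧ DifferentiableOn ℂ h (ball 0 1) ∧
      (∀ z ∈ ball (0:ℂ) 1, f z = g z + BlaschkeProd l z * h z) ∧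
      (∀ z ∈ ball (0:ℂ) 1,
        ‖g z‖ ^ 2 ≤ (∑' k, ‖coef f k‖ ^ 2) * (2 * m / (1 - r))) := by
  induction m with
  | zero =>
    intro l _ f hf hs
    refine ⟨fun _ => 0, f, differentiableOn_const 0, hf, fun z _ => by
      simp [BlaschkeProd], fun z _ => ?_⟩
    have h0 : ‖(0:ℂ)‖ ^ 2 = 0 := by simp
    rw [h0]
    refine mul_nonneg (tsum_nonneg fun k => sq_nonneg _) ?_
    have hr' : (0:ℝ) < 1 - r := by linarith
    positivity
  | succ m ih =>
    intro l hl f hf hs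
    have hr' : (0:ℝ) < 1 - r := by linarith
    set lam := l 0 with hlam
    have hlamr : ‖lam‖ ≤ r := hl 0
    have hlam1 : ‖lam‖ < 1 := lt_of_le_of_lt hlamr hr1
    obtain ⟨hstepsum, hid⟩ := step_package hlam1 hf hs
    have hstepdiff := stepf_diff hlam1 hf
    obtain ⟨g₁, h₁, hg₁d, hh₁d, hdec₁, hbd₁⟩ :=
      ih (fun i => l i.succ) (fun i => hl i.succ) (stepf lam f) hstepdiff hstepsum
    refine ⟨fun z => (1 - conj lam * lam) * f lam * (1 - conj lam * z)⁻¹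
        - blaschke lam z * g₁ z, fun z => - h₁ z, ?_, ?_, ?_, ?_⟩
    · refine DifferentiableOn.sub ?_ ((diff_blaschke hlam1).mul hg₁d)
      exact (differentiableOn_const _).mul (diff_kern hlam1)
    · exact hh₁d.neg
    · intro z hz
      have hz' := mem_ball_zero_iff.1 hz
      have hd := stepf_decomp (F := f) hlam1 hz'
      have hB : BlaschkeProd l z
          = blaschke lam z * BlaschkeProd (fun i => l i.succ) z := by
        rw [BlaschkeProd, BlaschkeProd, Fin.prod_univ_succ]
      rw [hB, hd, hdec₁ z hz]
      ring
    · intro z hz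
      have hz' := mem_ball_zero_iff.1 hz
      set α := (1 - ‖lam‖ ^ 2) * ‖f lam‖ ^ 2 with hα
      set β := ∑' k, ‖coef (stepf lam f) k‖ ^ 2 with hβ
      have hα0 : 0 ≤ α := by
        have : (0:ℝ) ≤ 1 - ‖lam‖ ^ 2 := by nlinarith [norm_nonneg lam]
        positivity
      have hβ0 : 0 ≤ β := tsum_nonneg fun k => sq_nonneg _
      set T1 := ‖(1 - conj lam * lam) * f lam * (1 - conj lam * z)⁻¹‖ with hT1
      set T2 := ‖g₁ z‖ with hT2
      have hgle : ‖(1 - conj lam * lam) * f lam * (1 - conj lam * z)⁻¹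
          - blaschke lam z * g₁ z‖ ≤ T1 + T2 := by
        refine le_trans (norm_sub_le _ _) ?_
        have h1 : ‖blaschke lam z * g₁ z‖ ≤ T2 := by
          rw [norm_mul]
          have := norm_blaschke_le hlam1 hz'
          nlinarith [norm_nonneg (g₁ z)]
        linarith
      have hT1sq : T1 ^ 2 ≤ α * (2 / (1 - r)) := by
        have he : T1 = (1 - ‖lam‖ ^ 2) * ‖f lam‖ * ‖((1:ℂ) - conj lam * z)⁻¹‖ := by
          rw [hT1, norm_mul, norm_mul, conj_self_norm, Complex.norm_real,
            Real.norm_of_nonneg (by nlinarith [norm_nonneg lam])]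
        have hk := kern_bound hlamr hr1 hz'
        rw [he, hα]
        have h2 : ((1 - ‖lam‖ ^ 2) * ‖f lam‖ * ‖((1:ℂ) - conj lam * z)⁻¹‖) ^ 2
            = ((1 - ‖lam‖ ^ 2) * ‖f lam‖ ^ 2) *
              ((1 - ‖lam‖ ^ 2) * ‖((1:ℂ) - conj lam * z)⁻¹‖ ^ 2) := by ring
        rw [h2]
        refine mul_le_mul_of_nonneg_left hk ?_
        have : (0:ℝ) ≤ 1 - ‖lam‖ ^ 2 := by nlinarith [norm_nonneg lam]
        positivity
      have hT2sq : T2 ^ 2 ≤ β * (2 * m / (1 - r)) := hbd₁ z hz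
      have hkey : (T1 + T2) ^ 2 ≤ (α + β) * (2 / (1 - r) + 2 * m / (1 - r)) :=
        sum_sq_le (norm_nonneg _) (norm_nonneg _) hα0 hβ0 (by positivity) (by positivity)
          hT1sq hT2sq
      have hfin : (α + β) * (2 / (1 - r) + 2 * m / (1 - r))
          = (∑' k, ‖coef f k‖ ^ 2) * (2 * (m + 1 : ℕ) / (1 - r)) := by
        rw [hid]
        push_cast
        ring
      calc ‖(1 - conj lam * lam) * f lam * (1 - conj lam * z)⁻¹
          - blaschke lam z * g₁ z‖ ^ 2 ≤ (T1 + T2) ^ 2 := by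
            nlinarith [norm_nonneg ((1 - conj lam * lam) * f lam * (1 - conj lam * z)⁻¹
              - blaschke lam z * g₁ z), hgle]
        _ ≤ (α + β) * (2 / (1 - r) + 2 * m / (1 - r)) := hkey
        _ = _ := hfin

lemma Hinfnorm_nonneg {g : ℂ → ℂ} (hg : MemHinf g) : 0 ≤ Hinfnorm g := by
  refine le_trans (norm_nonneg (g 0)) (le_csSup hg.2 ⟨0, ?_, rfl⟩)
  exact mem_ball_self one_pos

end CnrAux

open CnrAux in
/-- Upper bound for the interpolation constant:
`C_{n,r}(H², H^∞) ≤ (2n/(1-r))^{1/2}`. -/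
theorem Cnr_H2_Hinf_upper (n : ℕ) (hn : 1 ≤ n) (r : ℝ) (hr0 : 0 ≤ r) (hr1 : r < 1) :
    CnrH2Hinf n r ≤ Real.sqrt (2 * (n : ℝ) / (1 - r)) := by
  have hr' : (0:ℝ) < 1 - r := by linarith
  refine Real.sSup_le ?_ (Real.sqrt_nonneg _)
  rintro c ⟨m, hm, l, hl, rfl⟩
  refine Real.sSup_le ?_ (Real.sqrt_nonneg _)
  rintro c' ⟨f, hf, hnorm, rfl⟩
  obtain ⟨g, h, hgd, hhd, hdec, hbd⟩ :=
    peel m hr0 hr1 l hl f (holOn_iff.1 hf.1) hf.2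
  have hsum0 : (0:ℝ) ≤ ∑' k, ‖coef f k‖ ^ 2 := tsum_nonneg fun k => sq_nonneg _
  have hsum1 : (∑' k, ‖coef f k‖ ^ 2) ≤ 1 := by
    have := hnorm
    rw [H2norm] at this
    nlinarith [Real.sq_sqrt hsum0, Real.sqrt_nonneg (∑' k, ‖coef f k‖ ^ 2)]
  set M := Real.sqrt (2 * (n:ℝ) / (1 - r)) with hM
  have hbound : ∀ z ∈ Metric.ball (0:ℂ) 1, ‖g z‖ ≤ M := by
    intro z hz
    have h1 := hbd z hz
    have hmn : (m:ℝ) ≤ n := by exact_mod_cast hm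
    have ha : 2 * (m:ℝ) / (1 - r) ≤ 2 * (n:ℝ) / (1 - r) := by gcongr
    have hd0 : (0:ℝ) ≤ 2 * (m:ℝ) / (1 - r) := by positivity
    have h2 : (∑' k, ‖coef f k‖ ^ 2) * (2 * m / (1 - r)) ≤ 2 * (n:ℝ) / (1 - r) := by
      calc (∑' k, ‖coef f k‖ ^ 2) * (2 * m / (1 - r)) ≤ 1 * (2 * (m:ℝ) / (1 - r)) :=
            mul_le_mul_of_nonneg_right hsum1 hd0
        _ = 2 * (m:ℝ) / (1 - r) := one_mul _
        _ ≤ 2 * (n:ℝ) / (1 - r) := ha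
    rw [hM]
    refine (Real.le_sqrt (norm_nonneg _) ?_).2 (le_trans h1 h2)
    positivity
  have hMem : MemHinf g := by
    refine ⟨holOn_iff.2 hgd, ⟨M, ?_⟩⟩
    rintro x ⟨z, hz, rfl⟩
    exact hbound z hz
  have hAgree : AgreeOn l f g := by
    refine ⟨h, holOn_iff.2 hhd, fun z hz => ?_⟩
    rw [hdec z hz]
    ring
  have hHinf_le : Hinfnorm g ≤ M := by
    refine Real.sSup_le ?_ (Real.sqrt_nonneg _)
    rintro x ⟨z, hz, rfl⟩
    exact hbound z hz
  have hmemS : Hinfnorm g ∈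
      {m | ∃ g', MemHinf g' ∧ Hinfnorm g' = m ∧ AgreeOn l f g'} :=
    ⟨g, hMem, rfl, hAgree⟩
  have hbdd : BddBelow {m | ∃ g', MemHinf g' ∧ Hinfnorm g' = m ∧ AgreeOn l f g'} := by
    refine ⟨0, ?_⟩
    rintro x ⟨g', hg', rfl, _⟩
    exact Hinfnorm_nonneg hg'
  exact le_trans (csInf_le hbdd hmemS) hHinf_le
end
end

section
/- Let σ_{0,n} = {0,…,0} denote the origin with multiplicity n (so that g agrees with f on σ_{0,n} means f − g ∈ z^n·Hol(D)). Then c(σ_{0,n}, H², H^∞) ≥ (1/2)√n for all n ≥ 2. -/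
open Complex Metric ComplexConjugate

noncomputable section

lemma coef_eq_coeff {f : ℂ → ℂ} {p : FormalMultilinearSeries ℂ ℂ ℂ} {r : ENNReal}
    (h : HasFPowerSeriesOnBall f p 0 r) (k : ℕ) : coef f k = p.coeff k := by
  have h1 := h.factorial_smul (1 : ℂ) k
  unfold coef
  rw [iteratedDeriv_eq_iteratedFDeriv, ← h1]
  rw [← Nat.cast_smul_eq_nsmul ℂ, smul_eq_mul]
  rw [FormalMultilinearSeries.coeff]
  field_simp [Nat.factorial_ne_zero]
  rfl

lemma poly_hasFPSeries (c : ℕ → ℂ) (N : ℕ) :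
    HasFPowerSeriesOnBall (fun z : ℂ => ∑ k ∈ Finset.range N, c k * z ^ k)
      (FormalMultilinearSeries.ofScalars ℂ (fun k => if k < N then c k else 0)) 0 1 := by
  constructor
  · refine FormalMultilinearSeries.le_radius_of_bound _
      (∑ k ∈ Finset.range N, ‖FormalMultilinearSeries.ofScalars ℂ
        (fun k => if k < N then c k else 0) k‖) (fun n => ?_)
    rw [NNReal.coe_one, one_pow, mul_one]
    by_cases hn : n < N
    · exact Finset.single_le_sum (f := fun k => ‖FormalMultilinearSeries.ofScalars ℂ
        (fun k => if k < N then c k else 0) k‖) (fun i _ => norm_nonneg _)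
        (Finset.mem_range.2 hn)
    · have : (if n < N then c n else 0) = 0 := by simp [hn]
      rw [FormalMultilinearSeries.ofScalars_eq_zero_of_scalar_zero _ this, norm_zero]
      exact Finset.sum_nonneg (fun i _ => norm_nonneg _)
  · exact one_pos
  · intro y _
    have : ∀ k : ℕ, (FormalMultilinearSeries.ofScalars ℂ
        (fun k => if k < N then c k else 0)) k (fun _ => y)
        = (if k < N then c k else 0) * y ^ k := by
      intro k; rw [FormalMultilinearSeries.ofScalars_apply_eq]; simp
    simp only [this, zero_add]
    have h0 : ∀ k ∉ Finset.range N, (if k < N then c k else 0) * y ^ k = 0 := by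
      intro k hk
      rw [Finset.mem_range] at hk
      simp [Nat.not_lt.2 (Nat.le_of_not_lt hk)]
    have hsum : (∑ k ∈ Finset.range N, c k * y ^ k)
        = ∑ k ∈ Finset.range N, (if k < N then c k else 0) * y ^ k :=
      Finset.sum_congr rfl (fun k hk => by rw [if_pos (Finset.mem_range.1 hk)])
    rw [hsum]
    exact hasSum_sum_of_ne_finset_zero h0

lemma coef_poly (c : ℕ → ℂ) (N m : ℕ) :
    coef (fun z : ℂ => ∑ k ∈ Finset.range N, c k * z ^ k) m = if m < N then c m else 0 := by
  rw [coef_eq_coeff (poly_hasFPSeries c N)]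
  have := FormalMultilinearSeries.ofScalars_apply_eq (E := ℂ)
    (fun k => if k < N then c k else 0) 1 m
  rw [FormalMultilinearSeries.coeff]
  rw [show (1 : Fin m → ℂ) = (fun _ => (1:ℂ)) from rfl, this]
  simp

open intervalIntegral in
lemma int_pos_pow {g : ℂ → ℂ} {r : NNReal} (hg : DifferentiableOn ℂ g (closedBall 0 r))
    (hr : 0 < (r : ℝ)) (m : ℕ) (hm : 1 ≤ m) :
    ∫ θ in (0:ℝ)..(2 * Real.pi), g (circleMap 0 r θ) * (Complex.exp (θ * I)) ^ m = 0 := by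
  obtain ⟨m, rfl⟩ : ∃ m', m = m' + 1 := ⟨m - 1, by omega⟩
  have hF : DifferentiableOn ℂ (fun z => g z * z ^ m) (closedBall 0 r) :=
    hg.mul (differentiable_pow _).differentiableOn
  have h0 := circleIntegral_eq_zero_of_differentiable_on_off_countable
    (f := fun z => g z * z ^ m)
    (c := 0) (R := r) hr.le Set.countable_empty hF.continuousOn
    (fun z hz => hF.differentiableAt (closedBall_mem_nhds_of_mem (by simpa using hz.1)))
  rw [circleIntegral] at h0
  have key : ∀ θ : ℝ, deriv (circleMap 0 r) θ •
      (g (circleMap 0 r θ) * (circleMap 0 r θ) ^ m)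
      = (I * (r:ℂ) ^ (m+1)) * (g (circleMap 0 r θ) * (Complex.exp (θ * I)) ^ (m+1)) := by
    intro θ
    simp only [deriv_circleMap, circleMap, zero_add, smul_eq_mul, mul_pow]
    ring
  simp only [key] at h0
  rw [integral_const_mul] at h0
  rcases mul_eq_zero.1 h0 with h | h
  · exact absurd h (by
      simp only [mul_eq_zero, I_ne_zero, pow_eq_zero_iff, Ne, false_or, not_or]
      exact fun hc => by simp [Complex.ofReal_eq_zero] at hc; simp [hc] at hr)
  · exact h

open intervalIntegral in
lemma int_neg_pow {g : ℂ → ℂ} {r : NNReal} (hg : DifferentiableOn ℂ g (closedBall 0 r))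
    (hr : 0 < (r : ℝ)) (m : ℕ) :
    ∫ θ in (0:ℝ)..(2 * Real.pi), g (circleMap 0 r θ) * ((Complex.exp (θ * I))⁻¹) ^ m
      = 2 * Real.pi * (r:ℝ) ^ m * coef g m := by
  have hps := hg.hasFPowerSeriesOnBall (by exact_mod_cast hr)
  have hc := coef_eq_coeff hps m
  rw [FormalMultilinearSeries.coeff] at hc
  have happ := cauchyPowerSeries_apply g 0 (r:ℝ) m 1
  rw [show (1 : Fin m → ℂ) = (fun _ => (1:ℂ)) from rfl] at hc
  rw [happ] at hc
  rw [circleIntegral] at hc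
  have key : ∀ θ : ℝ, deriv (circleMap 0 r) θ •
      ((1 / (circleMap 0 r θ - 0)) ^ m • (circleMap 0 r θ - 0)⁻¹ • g (circleMap 0 r θ))
      = (I * ((r:ℂ)⁻¹) ^ m) * (g (circleMap 0 r θ) * ((Complex.exp (θ * I))⁻¹) ^ m) := by
    intro θ
    have hex : Complex.exp (θ * I) ≠ 0 := Complex.exp_ne_zero _
    have hrc : (r : ℂ) ≠ 0 := by
      simp only [Ne, Complex.ofReal_eq_zero]
      exact fun hc' => by simp [hc'] at hr
    simp only [deriv_circleMap, circleMap, zero_add, smul_eq_mul, sub_zero, one_div,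
      mul_inv, mul_pow]
    field_simp
  simp only [key] at hc
  rw [integral_const_mul] at hc
  have h2 : (2 * (Real.pi:ℂ) * I)⁻¹ * (I * ((r:ℂ)⁻¹) ^ m) ≠ 0 := by
    have : (Real.pi : ℂ) ≠ 0 := by exact_mod_cast Real.pi_ne_zero
    have hrc : (r : ℂ) ≠ 0 := by
      simp only [Ne, Complex.ofReal_eq_zero]
      exact fun hc' => by simp [hc'] at hr
    simp [I_ne_zero, this, hrc]
  rw [smul_eq_mul] at hc
  have hrc : (r : ℂ) ≠ 0 := by
    simp only [Ne, Complex.ofReal_eq_zero]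
    exact fun hc' => by simp [hc'] at hr
  have hπ : (Real.pi : ℂ) ≠ 0 := by exact_mod_cast Real.pi_ne_zero
  field_simp at hc
  have goal' : ∫ θ in (0:ℝ)..(2 * Real.pi), g (circleMap 0 r θ) * ((Complex.exp (θ * I))⁻¹) ^ m
      = ∫ θ in (0:ℝ)..(2 * Real.pi), g (circleMap 0 r θ) / Complex.exp (θ * I) ^ m := by
    congr 1
    funext θ
    rw [inv_pow, div_eq_mul_inv]
  rw [goal']
  have hint : ∫ x in (0:ℝ)..(2 * Real.pi), g (circleMap 0 r x) * (1 / Complex.exp (I * x)) ^ m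
      = ∫ θ in (0:ℝ)..(2 * Real.pi), g (circleMap 0 r θ) / Complex.exp (θ * I) ^ m := by
    congr 1; funext θ; rw [one_div, inv_pow, div_eq_mul_inv, mul_comm I]
  rw [hint] at hc
  rw [show 2 * (Real.pi:ℂ) * ((r:ℝ):ℂ) ^ m * coef g m = ((r:ℝ):ℂ) ^ m * (coef g m * 2 * Real.pi) by ring,
    hc, ← mul_assoc, ← mul_pow, mul_one_div_cancel hrc, one_pow, one_mul]

lemma int_pair {g : ℂ → ℂ} {r : NNReal} (hg : DifferentiableOn ℂ g (closedBall 0 r))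
    (hr : 0 < (r : ℝ)) (j k : ℕ) :
    ∫ θ in (0:ℝ)..(2 * Real.pi), g (circleMap 0 r θ) *
        ((Complex.exp (θ * I)) ^ k * conj ((Complex.exp (θ * I)) ^ j))
      = if k ≤ j then 2 * Real.pi * (r:ℝ) ^ (j - k) * coef g (j - k) else 0 := by
  have hconj : ∀ θ : ℝ, conj ((Complex.exp (θ * I)) ^ j) = ((Complex.exp (θ * I))⁻¹) ^ j := by
    intro θ
    rw [map_pow, ← Complex.exp_conj]
    rw [show conj ((θ:ℂ) * I) = -(θ * I) by simp, Complex.exp_neg]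
  by_cases hkj : k ≤ j
  · rw [if_pos hkj]
    have key : ∀ θ : ℝ, (Complex.exp (θ * I)) ^ k * ((Complex.exp (θ * I))⁻¹) ^ j
        = ((Complex.exp (θ * I))⁻¹) ^ (j - k) := by
      intro θ
      have hex : Complex.exp (θ * I) ≠ 0 := Complex.exp_ne_zero _
      rw [show j = (j - k) + k by omega, pow_add]
      field_simp
      rw [Nat.add_sub_cancel, mul_comm, ← mul_assoc, ← mul_pow, one_div, inv_mul_cancel₀ hex, one_pow, one_mul]
    calc _ = ∫ θ in (0:ℝ)..(2 * Real.pi), g (circleMap 0 r θ) *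
          ((Complex.exp (θ * I))⁻¹) ^ (j - k) := by
            congr 1; funext θ; rw [hconj, key]
      _ = _ := int_neg_pow hg hr (j - k)
  · rw [if_neg hkj]
    have key : ∀ θ : ℝ, (Complex.exp (θ * I)) ^ k * ((Complex.exp (θ * I))⁻¹) ^ j
        = (Complex.exp (θ * I)) ^ (k - j) := by
      intro θ
      have hex : Complex.exp (θ * I) ≠ 0 := Complex.exp_ne_zero _
      rw [show k = (k - j) + j by omega, pow_add]
      field_simp
      rw [Nat.add_sub_cancel, one_div, mul_assoc, ← mul_pow, mul_inv_cancel₀ hex, one_pow, mul_one]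
    calc _ = ∫ θ in (0:ℝ)..(2 * Real.pi), g (circleMap 0 r θ) *
          (Complex.exp (θ * I)) ^ (k - j) := by
            congr 1; funext θ; rw [hconj, key]
      _ = 0 := int_pos_pow hg hr (k - j) (by omega)

lemma comb2 (F : ℕ → ℂ) (n : ℕ) :
    ∑ j ∈ Finset.range n, ∑ m ∈ Finset.range (j + 1), F m
      = ∑ m ∈ Finset.range n, ((n - m : ℕ) : ℂ) * F m := by
  induction n with
  | zero => simp
  | succ n ih =>
    rw [Finset.sum_range_succ, ih,
      Finset.sum_range_succ (fun m => ((n + 1 - m : ℕ) : ℂ) * F m),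
      Finset.sum_range_succ (fun m => F m)]
    have hC : ∀ m ∈ Finset.range n, ((n + 1 - m : ℕ) : ℂ) * F m
        = ((n - m : ℕ) : ℂ) * F m + F m := by
      intro m hm
      rw [Finset.mem_range] at hm
      rw [Nat.cast_sub (by omega), Nat.cast_sub (by omega)]
      push_cast
      ring
    rw [Finset.sum_congr rfl hC, Finset.sum_add_distrib]
    simp only [Nat.add_sub_cancel_left, Nat.cast_one, one_mul]
    ring

lemma comb (F : ℕ → ℂ) (n : ℕ) :
    ∑ j ∈ Finset.range n, ∑ k ∈ Finset.range n, (if k ≤ j then F (j - k) else 0)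
      = ∑ m ∈ Finset.range n, ((n - m : ℕ) : ℂ) * F m := by
  have step1 : ∀ j ∈ Finset.range n,
      ∑ k ∈ Finset.range n, (if k ≤ j then F (j - k) else 0)
        = ∑ m ∈ Finset.range (j + 1), F m := by
    intro j hj
    rw [Finset.mem_range] at hj
    rw [← Finset.sum_range_reflect (fun m => F m) (j+1)]
    rw [← Finset.sum_subset (Finset.range_subset_range.2 (by omega : j + 1 ≤ n))
      (fun k _ hk => if_neg (by rw [Finset.mem_range] at hk; omega))]
    refine Finset.sum_congr rfl (fun k hk => ?_)
    rw [Finset.mem_range] at hk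
    rw [if_pos (by omega)]
    norm_num
  rw [Finset.sum_congr rfl step1, comb2]

lemma fejer {g : ℂ → ℂ} {r : NNReal} (hg : DifferentiableOn ℂ g (closedBall 0 r))
    (hr : 0 < (r : ℝ)) (n : ℕ) :
    ∫ θ in (0:ℝ)..(2 * Real.pi), g (circleMap 0 r θ) *
        ((∑ k ∈ Finset.range n, (Complex.exp (θ * I)) ^ k) *
          conj (∑ k ∈ Finset.range n, (Complex.exp (θ * I)) ^ k))
      = ∑ m ∈ Finset.range n, ((n - m : ℕ) : ℂ) *
          (2 * Real.pi * (r:ℝ) ^ (m) * coef g (m)) := by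
  have hgc : Continuous (fun θ : ℝ => g (circleMap 0 r θ)) := by
    apply hg.continuousOn.comp_continuous (continuous_circleMap 0 r)
    intro θ
    simp [mem_closedBall, circleMap, _root_.abs_of_nonneg r.2]
  have hec : Continuous (fun θ : ℝ => Complex.exp (θ * I)) :=
    Complex.continuous_exp.comp (Complex.continuous_ofReal.mul continuous_const)
  have expand : ∀ θ : ℝ, g (circleMap 0 r θ) *
        ((∑ k ∈ Finset.range n, (Complex.exp (θ * I)) ^ k) *
          conj (∑ k ∈ Finset.range n, (Complex.exp (θ * I)) ^ k))
      = ∑ j ∈ Finset.range n, ∑ k ∈ Finset.range n,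
          g (circleMap 0 r θ) * ((Complex.exp (θ * I)) ^ k * conj ((Complex.exp (θ * I)) ^ j)) := by
    intro θ
    rw [map_sum, Finset.sum_mul_sum, Finset.mul_sum]
    simp_rw [Finset.mul_sum]
    exact Finset.sum_comm
  calc _ = ∫ θ in (0:ℝ)..(2 * Real.pi), ∑ j ∈ Finset.range n, ∑ k ∈ Finset.range n,
          g (circleMap 0 r θ) * ((Complex.exp (θ * I)) ^ k * conj ((Complex.exp (θ * I)) ^ j)) := by
        congr 1; funext θ; exact expand θ
    _ = ∑ j ∈ Finset.range n, ∑ k ∈ Finset.range n, ∫ θ in (0:ℝ)..(2 * Real.pi),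
          g (circleMap 0 r θ) * ((Complex.exp (θ * I)) ^ k * conj ((Complex.exp (θ * I)) ^ j)) := by
        rw [intervalIntegral.integral_finset_sum]
        · exact Finset.sum_congr rfl (fun j _ => intervalIntegral.integral_finset_sum
            (fun k _ => ((hgc.mul ((hec.pow k).mul
              (Complex.continuous_conj.comp (hec.pow j)))).intervalIntegrable _ _)))
        · intro j _
          apply Continuous.intervalIntegrable
          exact continuous_finset_sum _ (fun k _ => hgc.mul ((hec.pow k).mul
            (Complex.continuous_conj.comp (hec.pow j))))
    _ = ∑ j ∈ Finset.range n, ∑ k ∈ Finset.range n,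
          (if k ≤ j then 2 * Real.pi * (r:ℝ) ^ (j - k) * coef g (j - k) else 0) := by
        exact Finset.sum_congr rfl (fun j _ => Finset.sum_congr rfl
          (fun k _ => int_pair hg hr j k))
    _ = _ := comb (fun m => 2 * Real.pi * (r:ℝ) ^ m * coef g m) n

lemma coef_one (m : ℕ) : coef (fun _ : ℂ => (1:ℂ)) m = if m = 0 then 1 else 0 := by
  have : (fun _ : ℂ => (1:ℂ)) = (fun z : ℂ => ∑ k ∈ Finset.range 1, (fun _ : ℕ => (1:ℂ)) k * z ^ k) := by
    funext z; simp
  rw [this, coef_poly]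
  cases m <;> simp

lemma fejer_kernel_int {r : NNReal} (hr0 : 0 < (r : ℝ)) (n : ℕ) (hn : 0 < n) :
    ∫ θ in (0:ℝ)..(2 * Real.pi),
        Complex.normSq (∑ k ∈ Finset.range n, (Complex.exp (θ * I)) ^ k)
      = 2 * Real.pi * n := by
  have h1 := fejer (g := fun _ => (1:ℂ)) (r := r)
    (differentiableOn_const 1) hr0 n
  simp only [one_mul, coef_one] at h1
  have h2 : ∑ m ∈ Finset.range n, ((n - m : ℕ) : ℂ) *
      (2 * Real.pi * (r:ℝ) ^ m * if m = 0 then 1 else 0) = 2 * Real.pi * n := by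
    rw [Finset.sum_eq_single_of_mem 0 (Finset.mem_range.2 hn)]
    · simp; ring
    · intro m _ hm
      simp [hm]
  rw [h2] at h1
  have h3 : ∀ θ : ℝ, (∑ k ∈ Finset.range n, (Complex.exp (θ * I)) ^ k) *
      conj (∑ k ∈ Finset.range n, (Complex.exp (θ * I)) ^ k)
      = ((Complex.normSq (∑ k ∈ Finset.range n, (Complex.exp (θ * I)) ^ k) : ℝ) : ℂ) := by
    intro θ; exact Complex.mul_conj _
  simp only [h3] at h1
  rw [intervalIntegral.integral_ofReal] at h1
  exact_mod_cast h1

lemma key_bound {g : ℂ → ℂ} {M : ℝ} (hgd : DifferentiableOn ℂ g (ball 0 1))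
    (hM : ∀ z ∈ ball (0:ℂ) 1, ‖g z‖ ≤ M) {r : NNReal} (hr0 : 0 < (r : ℝ))
    (hr1 : (r : ℝ) < 1) (n : ℕ) (hn : 0 < n) :
    ‖∑ m ∈ Finset.range n, ((n - m : ℕ) : ℂ) *
        (2 * Real.pi * (r:ℝ) ^ m * coef g m)‖ ≤ 2 * Real.pi * n * M := by
  have hsub : closedBall (0:ℂ) r ⊆ ball 0 1 := closedBall_subset_ball hr1
  have hgd' : DifferentiableOn ℂ g (closedBall 0 r) := hgd.mono hsub
  rw [← fejer hgd' hr0 n]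
  set D : ℝ → ℂ := fun θ => ∑ k ∈ Finset.range n, (Complex.exp (θ * I)) ^ k with hD
  have hmem : ∀ θ : ℝ, circleMap 0 r θ ∈ ball (0:ℂ) 1 := by
    intro θ
    rw [mem_ball, dist_zero_right]
    calc ‖circleMap 0 r θ‖ = |(r:ℝ)| := by
          exact norm_circleMap_zero r θ
      _ = (r:ℝ) := _root_.abs_of_nonneg r.2
      _ < 1 := hr1
  have hgc : Continuous (fun θ : ℝ => g (circleMap 0 r θ)) := by
    apply hgd.continuousOn.comp_continuous (continuous_circleMap 0 r)
    exact hmem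
  have hec : Continuous D := by
    apply continuous_finset_sum
    exact fun k _ => (Complex.continuous_exp.comp
      (Complex.continuous_ofReal.mul continuous_const)).pow k
  have hpi : (0:ℝ) ≤ 2 * Real.pi := by positivity
  calc ‖∫ θ in (0:ℝ)..(2 * Real.pi), g (circleMap 0 r θ) * (D θ * conj (D θ))‖
      ≤ ∫ θ in (0:ℝ)..(2 * Real.pi), ‖g (circleMap 0 r θ) * (D θ * conj (D θ))‖ :=
        intervalIntegral.norm_integral_le_integral_norm hpi
    _ ≤ ∫ θ in (0:ℝ)..(2 * Real.pi), M * Complex.normSq (D θ) := by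
        apply intervalIntegral.integral_mono_on hpi
        · apply Continuous.intervalIntegrable
          exact (hgc.mul ((hec.mul (Complex.continuous_conj.comp hec)))).norm
        · apply Continuous.intervalIntegrable
          exact continuous_const.mul (Complex.continuous_normSq.comp hec)
        · intro θ _
          rw [Complex.mul_conj _]
          rw [norm_mul]
          have : ‖((Complex.normSq (D θ) : ℝ) : ℂ)‖ = Complex.normSq (D θ) := by
            rw [Complex.norm_real, Real.norm_of_nonneg (Complex.normSq_nonneg _)]
          rw [this]
          exact mul_le_mul_of_nonneg_right (hM _ (hmem θ)) (Complex.normSq_nonneg _)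
    _ = M * ∫ θ in (0:ℝ)..(2 * Real.pi), Complex.normSq (D θ) :=
        intervalIntegral.integral_const_mul _ _
    _ = M * (2 * Real.pi * n) := by rw [fejer_kernel_int hr0 n hn]
    _ = 2 * Real.pi * n * M := by ring


lemma holOn_of_differentiable {f : ℂ → ℂ} (h : Differentiable ℂ f) : HolOn f :=
  (isOpen_ball.analyticOn_iff_analyticOnNhd).2 ((h.differentiableOn).analyticOnNhd isOpen_ball)

lemma holOn_poly (c : ℕ → ℂ) (N : ℕ) :
    HolOn (fun z : ℂ => ∑ k ∈ Finset.range N, c k * z ^ k) :=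
  holOn_of_differentiable (Differentiable.fun_sum (fun i _ => (differentiable_pow i).const_mul _))

lemma hinfnorm_nonneg {g : ℂ → ℂ} (hg : MemHinf g) : 0 ≤ Hinfnorm g := by
  have h0 : ‖g 0‖ ∈ (fun z => ‖g z‖) '' Metric.ball (0:ℂ) 1 :=
    ⟨0, by simp, rfl⟩
  exact le_trans (norm_nonneg _) (le_csSup hg.2 h0)

lemma norm_le_hinfnorm {g : ℂ → ℂ} (hg : MemHinf g) {z : ℂ} (hz : z ∈ Metric.ball (0:ℂ) 1) :
    ‖g z‖ ≤ Hinfnorm g := le_csSup hg.2 ⟨z, hz, rfl⟩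

/-- The truncation interpolant. -/
lemma interp (n : ℕ) (f : ℂ → ℂ) (hf : MemH2 f) (hf1 : H2norm f ≤ 1) :
    ∃ g₀, MemHinf g₀ ∧ (∀ k < n, coef g₀ k = coef f k) ∧ Hinfnorm g₀ ≤ Real.sqrt n := by
  classical
  set g₀ : ℂ → ℂ := fun z => ∑ k ∈ Finset.range n, coef f k * z ^ k with hg₀
  set B : ℝ := ∑ k ∈ Finset.range n, ‖coef f k‖ with hB
  have hBnn : 0 ≤ B := Finset.sum_nonneg (fun _ _ => norm_nonneg _)
  have hbd : ∀ z ∈ Metric.ball (0:ℂ) 1, ‖g₀ z‖ ≤ B := by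
    intro z hz
    rw [mem_ball, dist_zero_right] at hz
    refine le_trans (norm_sum_le _ _) (Finset.sum_le_sum (fun k _ => ?_))
    rw [norm_mul, norm_pow]
    exact mul_le_of_le_one_right (norm_nonneg _) (pow_le_one₀ (norm_nonneg _) hz.le)
  have hmem : MemHinf g₀ := by
    refine ⟨holOn_poly _ _, ⟨B, ?_⟩⟩
    rintro x ⟨z, hz, rfl⟩
    exact hbd z hz
  have hagree : ∀ k < n, coef g₀ k = coef f k := by
    intro k hk
    rw [hg₀, coef_poly, if_pos hk]
  have hsum_le : ∑ k ∈ Finset.range n, ‖coef f k‖ ^ 2 ≤ 1 := by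
    have h1 : ∑ k ∈ Finset.range n, ‖coef f k‖ ^ 2 ≤ ∑' k, ‖coef f k‖ ^ 2 :=
      Summable.sum_le_tsum _ (fun k _ => sq_nonneg _) hf.2
    have h2 : (0:ℝ) ≤ ∑' k, ‖coef f k‖ ^ 2 := tsum_nonneg (fun k => sq_nonneg _)
    have h3 := Real.sq_sqrt h2
    rw [H2norm] at hf1
    nlinarith [Real.sqrt_nonneg (∑' k, ‖coef f k‖ ^ 2)]
  have hBle : B ≤ Real.sqrt n := by
    have h1 : B ^ 2 ≤ (n : ℝ) * ∑ k ∈ Finset.range n, ‖coef f k‖ ^ 2 := by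
      have := sq_sum_le_card_mul_sum_sq (s := Finset.range n)
        (f := fun k => ‖coef f k‖)
      simpa using this
    have h2 : B ^ 2 ≤ (n : ℝ) :=
      h1.trans (by nlinarith [Nat.cast_nonneg (α := ℝ) n])
    nlinarith [Real.sq_sqrt (Nat.cast_nonneg (α := ℝ) n), Real.sqrt_nonneg (n:ℝ)]
  refine ⟨g₀, hmem, hagree, ?_⟩
  apply Real.sSup_le _ (hBnn.trans hBle)
  rintro x ⟨z, hz, rfl⟩
  exact (hbd z hz).trans hBle

lemma gauss_sum_real (n : ℕ) :
    2 * ∑ m ∈ Finset.range n, ((n - m : ℕ) : ℝ) = n * (n + 1) := by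
  induction n with
  | zero => simp
  | succ n ih =>
    rw [Finset.sum_range_succ]
    have : ∀ m ∈ Finset.range n, ((n + 1 - m : ℕ) : ℝ) = ((n - m : ℕ) : ℝ) + 1 := by
      intro m hm
      rw [Finset.mem_range] at hm
      rw [Nat.cast_sub (by omega), Nat.cast_sub (by omega)]
      push_cast; ring
    rw [Finset.sum_congr rfl this, Finset.sum_add_distrib, mul_add, mul_add, ih]
    simp
    push_cast
    ring


set_option maxHeartbeats 1000000 in
open Filter Topology in
/-- Carathéodory–Schur interpolation at the origin with multiplicity `n`:
`c(σ_{0,n}, H², H^∞) ≥ (1/2)√n` for `n ≥ 2`.  Agreement on `σ_{0,n}`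
means coincidence of the first `n` Taylor coefficients. -/
theorem c_caratheodory_schur_origin_lower (n : ℕ) (hn : 2 ≤ n) :
    (1 / 2) * Real.sqrt (n : ℝ) ≤
      sSup { c | ∃ f, MemH2 f ∧ H2norm f ≤ 1 ∧
        c = sInf { m | ∃ g, MemHinf g ∧ Hinfnorm g = m ∧
              ∀ k < n, coef g k = coef f k } } := by
  classical
  have hn0 : 0 < n := by omega
  set q : ℝ := Real.sqrt n with hq
  have hq0 : 0 < q := Real.sqrt_pos.2 (by positivity)
  have hqsq : q * q = n := Real.mul_self_sqrt (by positivity)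
  -- the test function
  set f : ℂ → ℂ := fun z => ∑ k ∈ Finset.range n, ((q⁻¹ : ℝ) : ℂ) * z ^ k with hf
  have hcoef_f : ∀ m, coef f m = if m < n then ((q⁻¹ : ℝ) : ℂ) else 0 := by
    intro m; rw [hf, coef_poly]
  have hvanish : ∀ k ∉ Finset.range n, ‖coef f k‖ ^ 2 = 0 := by
    intro k hk
    rw [Finset.mem_range] at hk
    rw [hcoef_f, if_neg hk, norm_zero]
    norm_num
  have hMemH2f : MemH2 f := ⟨holOn_poly _ _, summable_of_ne_finset_zero hvanish⟩
  have hH2f : H2norm f ≤ 1 := by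
    rw [H2norm, tsum_eq_sum hvanish]
    have : ∀ k ∈ Finset.range n, ‖coef f k‖ ^ 2 = q⁻¹ ^ 2 := by
      intro k hk
      rw [Finset.mem_range] at hk
      rw [hcoef_f, if_pos hk, Complex.norm_real, Real.norm_of_nonneg (by positivity)]
    rw [Finset.sum_congr rfl this, Finset.sum_const, Finset.card_range, nsmul_eq_mul]
    have : (n:ℝ) * q⁻¹ ^ 2 = 1 := by
      field_simp
      nlinarith
    rw [this, Real.sqrt_one]
  -- the set of interpolation norms for a given f
  set S := { c | ∃ f, MemH2 f ∧ H2norm f ≤ 1 ∧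
        c = sInf { m | ∃ g, MemHinf g ∧ Hinfnorm g = m ∧
              ∀ k < n, coef g k = coef f k } } with hS
  have hbddBelow : ∀ f' : ℂ → ℂ, BddBelow { m | ∃ g, MemHinf g ∧ Hinfnorm g = m ∧
      ∀ k < n, coef g k = coef f' k } := by
    intro f'
    refine ⟨0, ?_⟩
    rintro m ⟨g, hg, rfl, -⟩
    exact hinfnorm_nonneg hg
  -- S is bounded above by √n
  have hbddS : BddAbove S := by
    refine ⟨Real.sqrt n, ?_⟩
    rintro c ⟨f', hf', hf'1, rfl⟩
    obtain ⟨g₀, hg₀, hag, hle⟩ := interp n f' hf' hf'1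
    exact (csInf_le (hbddBelow f') ⟨g₀, hg₀, rfl, hag⟩).trans hle
  -- our candidate element
  have hmemS : sInf { m | ∃ g, MemHinf g ∧ Hinfnorm g = m ∧
      ∀ k < n, coef g k = coef f k } ∈ S := ⟨f, hMemH2f, hH2f, rfl⟩
  refine le_trans ?_ (le_csSup hbddS hmemS)
  -- lower bound for the sInf
  obtain ⟨g₀, hg₀, hag₀, -⟩ := interp n f hMemH2f hH2f
  refine le_csInf ⟨Hinfnorm g₀, g₀, hg₀, rfl, hag₀⟩ ?_
  rintro M ⟨g, hg, rfl, hagree⟩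
  set M := Hinfnorm g with hM
  have hMnn : 0 ≤ M := hinfnorm_nonneg hg
  have hgd : DifferentiableOn ℂ g (ball 0 1) :=
    ((isOpen_ball.analyticOn_iff_analyticOnNhd).1 hg.1).differentiableOn
  have hbnd : ∀ z ∈ ball (0:ℂ) 1, ‖g z‖ ≤ M := fun z hz => norm_le_hinfnorm hg hz
  -- the polynomial lower bound, for each radius r < 1
  set φ : ℝ → ℝ := fun r => ∑ m ∈ Finset.range n, ((n - m : ℕ) : ℝ) *
      (2 * Real.pi * r ^ m * q⁻¹) with hφ
  have hstep : ∀ r : ℝ, r ∈ Set.Ioo (0:ℝ) 1 → φ r ≤ 2 * Real.pi * n * M := by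
    intro r hr
    obtain ⟨hr0, hr1⟩ := hr
    set R : NNReal := r.toNNReal with hR
    have hRr : (R : ℝ) = r := Real.coe_toNNReal r hr0.le
    have hkb := key_bound hgd hbnd (by rw [hRr]; exact hr0) (by rw [hRr]; exact hr1) n hn0
    have hsum : ∑ m ∈ Finset.range n, ((n - m : ℕ) : ℂ) *
        (2 * Real.pi * (R:ℝ) ^ m * coef g m) = ((φ r : ℝ) : ℂ) := by
      rw [hφ]
      push_cast
      refine Finset.sum_congr rfl (fun m hm => ?_)
      rw [Finset.mem_range] at hm
      rw [hagree m hm, hcoef_f m, if_pos hm, hRr]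
      push_cast
      ring
    rw [hsum] at hkb
    rw [Complex.norm_real] at hkb
    exact (le_abs_self _).trans hkb
  -- take the limit r → 1⁻
  have hφcont : Continuous φ := by
    apply continuous_finset_sum
    intro m _
    continuity
  have hφ1 : φ 1 ≤ 2 * Real.pi * n * M := by
    haveI hne : (𝓝[Set.Ioo (0:ℝ) 1] (1:ℝ)).NeBot := right_nhdsWithin_Ioo_neBot one_pos
    refine le_of_tendsto ((hφcont.tendsto 1).mono_left
      (nhdsWithin_le_nhds : 𝓝[Set.Ioo (0:ℝ) 1] 1 ≤ 𝓝 1)) ?_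
    exact eventually_mem_nhdsWithin.mono hstep
  -- conclude
  have hφ1eq : φ 1 = 2 * Real.pi * q⁻¹ * ∑ m ∈ Finset.range n, ((n - m : ℕ) : ℝ) := by
    rw [hφ, Finset.mul_sum]
    refine Finset.sum_congr rfl (fun m _ => ?_)
    rw [one_pow]
    ring
  have hgauss := gauss_sum_real n
  have hπ : 0 < Real.pi := Real.pi_pos
  rw [hφ1eq] at hφ1
  set Sr : ℝ := ∑ m ∈ Finset.range n, ((n - m : ℕ) : ℝ) with hSr
  -- 2π q⁻¹ Sr ≤ 2π n M  and  2 Sr = n (n+1), q² = n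
  have h1 : q⁻¹ * Sr ≤ (n:ℝ) * M := by
    have := hφ1
    nlinarith [hπ]
  have h2 : Sr ≤ (n:ℝ) * M * q := by
    have hqi : q⁻¹ * q = 1 := inv_mul_cancel₀ hq0.ne'
    have h3 := mul_le_mul_of_nonneg_right h1 hq0.le
    have h4 : q⁻¹ * Sr * q = Sr := by
      field_simp
    linarith [h3, h4.symm.le]
  have hn2 : (2:ℝ) ≤ n := by exact_mod_cast hn
  have hnpos : (0:ℝ) < n := by linarith
  have h4 : (n:ℝ) + 1 ≤ 2 * (M * q) := by nlinarith [h2, hgauss, hn2]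
  nlinarith [h4, hqsq, hq0, mul_pos hq0 hq0]
end
end
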